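/- arXiv:1010.2442 — 5 statements merged into one kernel-verified Lean document; each statement's English description precedes it below -/
import Mathlib

section
/- Let s > 0 and x ∈ ℝⁿ. If ψ_s is differentiable at x, then ψ is differentiable at (s,x) (as a function of the n+1 variables (s,x)), and ∂ψ/∂s(s,x) = −u̇₀(∇ψ_s(x)). Consequently Δ(ψ) ∩ ((0,∞) × ℝⁿ) = ⋃_{s>0} {s} × Δ(ψ_s): the singular locus of ψ is the union over s of {s} times the singular locus of ψ_s. -/
noncomputable section

open Set MeasureTheory Topology Filter
open scoped RealInnerProductSpace Pointwise

/-- Euclidean space ℝⁿ. -/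
abbrev E (n : ℕ) := EuclideanSpace ℝ (Fin n)

/-- The affine functions `l_k(y) = ⟨y, v_k⟩ − λ_k` defining the polytope. -/
def lfun {n d : ℕ} (v : Fin d → E n) (lam : Fin d → ℝ) (k : Fin d) (y : E n) : ℝ :=
  ⟪y, v k⟫ - lam k

/-- The polytope `P = ⋂_k {l_k ≥ 0}`. -/
def Pset {n d : ℕ} (v : Fin d → E n) (lam : Fin d → ℝ) : Set (E n) :=
  {y | ∀ k, 0 ≤ lfun v lam k y}

/-- Guillemin's canonical symplectic potential `u_G = Σ l_k log l_k`
(note `Real.log 0 = 0`, so `t log t = 0` at `t = 0`). -/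
def uG {n d : ℕ} (v : Fin d → E n) (lam : Fin d → ℝ) (y : E n) : ℝ :=
  ∑ k, lfun v lam k y * Real.log (lfun v lam k y)

/-- The biconjugate (convex envelope) over `P`:
`g**(y) = sup {a(y) : a affine on ℝⁿ, a ≤ g on P}`. -/
def biconj {n : ℕ} (P : Set (E n)) (g : E n → ℝ) (y : E n) : ℝ :=
  sSup {r : ℝ | ∃ (a : E n →L[ℝ] ℝ) (c : ℝ), (∀ z ∈ P, a z + c ≤ g z) ∧ r = a y + c}

/-- The subdifferential of `g : P → ℝ` at `y`, relative to `P`. -/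
def subdiff {n : ℕ} (P : Set (E n)) (g : E n → ℝ) (y : E n) : Set (E n) :=
  {w | ∀ z ∈ P, g y + ⟪w, z - y⟫ ≤ g z}

/-- The subdifferential of a finite (convex) function on all of ℝⁿ. -/
def subdiffR {n : ℕ} (f : E n → ℝ) (x : E n) : Set (E n) :=
  {w | ∀ z, f x + ⟪w, z - x⟫ ≤ f z}

/-- The total subdifferential of `ψ(s,x)` at `(s,x)`, a subset of `ℝ × ℝⁿ = ℝ^{n+1}`. -/
def subdiffT {n : ℕ} (ψ : ℝ → E n → ℝ) (s : ℝ) (x : E n) : Set (ℝ × E n) :=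
  {w | ∀ t z, ψ s x + w.1 * (t - s) + ⟪w.2, z - x⟫ ≤ ψ t z}

/-- The set of reachable partial `x`-subgradients `γ_x ψ(s,x)`. -/
def reachable {n : ℕ} (ψ : ℝ → E n → ℝ) (s : ℝ) (x : E n) : Set (E n) :=
  {w | ∃ xk : ℕ → E n, (∀ k, DifferentiableAt ℝ (ψ s) (xk k)) ∧
    Tendsto xk atTop (𝓝 x) ∧
    Tendsto (fun k => gradient (ψ s) (xk k)) atTop (𝓝 w)}

/-- `P` is a compact Delzant polytope with nonempty interior, cut out by the `l_k`,
with all facets of dimension `n−1`, and every vertex lying on exactly `n` of the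
hyperplanes `{l_k = 0}` with linearly independent normals. -/
def GoodPolytope {n d : ℕ} (v : Fin d → E n) (lam : Fin d → ℝ) (P : Set (E n)) : Prop :=
  P = Pset v lam ∧ IsCompact P ∧ (interior P).Nonempty ∧
  (∀ k, Module.finrank ℝ (affineSpan ℝ (P ∩ {y | lfun v lam k y = 0})).direction = n - 1) ∧
  (∀ p ∈ Set.extremePoints ℝ P, ∃ K : Finset (Fin d), K.card = n ∧
    (∀ k, k ∈ K ↔ lfun v lam k p = 0) ∧ LinearIndependent ℝ (fun k : K => v ↑k))

/-- The Cauchy data: `u₀ − u_G` extends smoothly to a neighborhood of `P`, `u₀` is convex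
on `P`, smooth with positive definite Hessian on `int P`; `u̇₀` extends smoothly to a
neighborhood of `P`. -/
def GoodData {n d : ℕ} (v : Fin d → E n) (lam : Fin d → ℝ) (P : Set (E n))
    (u₀ udot : E n → ℝ) : Prop :=
  (∃ U : Set (E n), IsOpen U ∧ P ⊆ U ∧ ∃ F : E n → ℝ, ContDiffOn ℝ (⊤ : ℕ∞) F U ∧
    ∀ y ∈ P, u₀ y = uG v lam y + F y) ∧
  ConvexOn ℝ P u₀ ∧
  ContDiffOn ℝ (⊤ : ℕ∞) u₀ (interior P) ∧
  (∀ y ∈ interior P, ∀ w : E n, w ≠ 0 → 0 < ⟪(fderiv ℝ (gradient u₀) y) w, w⟫) ∧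
  (∃ U : Set (E n), IsOpen U ∧ P ⊆ U ∧ ContDiffOn ℝ (⊤ : ℕ∞) udot U)

set_option maxHeartbeats 1000000 in
theorem core_lemma_aux {n : ℕ} {P : Set (E n)} {u₀ udot : E n → ℝ}
    (hPc : IsCompact P) (hPne : P.Nonempty)
    (hu₀ : ContinuousOn u₀ P)
    (hud : ∀ y ∈ P, ContinuousAt udot y)
    (ψ : ℝ → E n → ℝ)
    (hψ : ∀ s x, ψ s x = sSup {r : ℝ | ∃ y ∈ P, r = ⟪x, y⟫ - (u₀ y + s * udot y)})
    (s : ℝ) (x : E n) (hdiff : DifferentiableAt ℝ (ψ s) x) :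
    DifferentiableAt ℝ (fun q : ℝ × E n => ψ q.1 q.2) (s, x) ∧
      deriv (fun t => ψ t x) s = - udot (gradient (ψ s) x) := by
  classical
  set g : ℝ × E n → E n → ℝ := fun q y => ⟪q.2, y⟫ - (u₀ y + q.1 * udot y) with hg
  have hset : ∀ q : ℝ × E n,
      {r : ℝ | ∃ y ∈ P, r = ⟪q.2, y⟫ - (u₀ y + q.1 * udot y)} = g q '' P := by
    intro q; ext r
    simp only [Set.mem_image, Set.mem_setOf_eq, hg, eq_comm]
  have hψg' : ∀ q : ℝ × E n, ψ q.1 q.2 = sSup (g q '' P) := by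
    intro q; rw [hψ q.1 q.2, hset q]
  have hcont : ∀ q : ℝ × E n, ContinuousOn (g q) P := by
    intro q
    apply ContinuousOn.sub
    · exact (continuous_inner.comp (continuous_const.prodMk continuous_id)).continuousOn
    · exact hu₀.add (continuousOn_const.mul fun y hy => (hud y hy).continuousWithinAt)
  have hmax : ∀ q : ℝ × E n, ∃ y ∈ P, IsMaxOn (g q) P y := fun q =>
    hPc.exists_isMaxOn hPne (hcont q)
  set Y : ℝ × E n → E n := fun q => (hmax q).choose with hYdef
  have hYP : ∀ q, Y q ∈ P := fun q => (hmax q).choose_spec.1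
  have hYmax : ∀ q, IsMaxOn (g q) P (Y q) := fun q => (hmax q).choose_spec.2
  have hψY : ∀ q : ℝ × E n, ψ q.1 q.2 = g q (Y q) := by
    intro q
    rw [hψg' q]
    refine IsGreatest.csSup_eq ⟨⟨Y q, hYP q, rfl⟩, ?_⟩
    rintro r ⟨z, hz, rfl⟩
    exact hYmax q hz
  have hle : ∀ (q : ℝ × E n) (y : E n), y ∈ P → g q y ≤ ψ q.1 q.2 := by
    intro q y hy; rw [hψY q]; exact hYmax q hy
  -- any maximizer at (s,x) equals the gradient of ψ s at x
  have key : ∀ y ∈ P, IsMaxOn (g (s, x)) P y → gradient (ψ s) x = y := by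
    intro y hy hymax
    have hψsx : ψ s x = g (s, x) y := by
      refine le_antisymm ?_ (hle (s, x) y hy)
      rw [hψY (s, x)]
      exact hymax (hYP (s, x))
    have hmin : IsLocalMin (fun z => ψ s z - (innerSL ℝ y) z) x := by
      apply Filter.Eventually.of_forall
      intro z
      have h1 : g (s, z) y ≤ ψ s z := hle (s, z) y hy
      have h2 : (innerSL ℝ y) z = ⟪z, y⟫ := real_inner_comm z y
      have h3 : (innerSL ℝ y) x = ⟪x, y⟫ := real_inner_comm x y
      simp only [hg] at h1 hψsx
      simp only [h2, h3, hψsx]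
      linarith
    have hdz : fderiv ℝ (fun z => ψ s z - (innerSL ℝ y) z) x = 0 :=
      hmin.fderiv_eq_zero
    have hdsub : fderiv ℝ (fun z => ψ s z - (innerSL ℝ y) z) x
        = fderiv ℝ (ψ s) x - innerSL ℝ y := by
      rw [fderiv_fun_sub hdiff (innerSL ℝ y).differentiableAt, (innerSL ℝ y).fderiv]
    have hfd : fderiv ℝ (ψ s) x = innerSL ℝ y := by
      rw [hdsub] at hdz; exact sub_eq_zero.mp hdz
    have hTD : (InnerProductSpace.toDual ℝ (E n) y : E n →L[ℝ] ℝ) = innerSL ℝ y := by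
      ext z; simp [InnerProductSpace.toDual_apply_apply]
    have h := hdiff.hasFDerivAt
    rw [hfd, ← hTD] at h
    exact (hasGradientAt_iff_hasFDerivAt.mpr h).gradient
  set y₀ : E n := Y (s, x) with hy₀def
  have hy₀P : y₀ ∈ P := hYP (s, x)
  have hgrad : gradient (ψ s) x = y₀ := key _ (hYP (s, x)) (hYmax (s, x))
  -- continuity of the argmax selection at (s, x)
  have hYtendsto : Tendsto Y (𝓝 (s, x)) (𝓝 y₀) := by
    rw [tendsto_iff_seq_tendsto]
    intro q hq
    apply tendsto_of_subseq_tendsto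
    intro ns hns
    obtain ⟨yl, hylP, φ, hφmono, hφt⟩ := hPc.tendsto_subseq (fun k => hYP (q (ns k)))
    set Q : ℕ → ℝ × E n := fun k => q (ns (φ k)) with hQdef
    have hQt : Tendsto Q atTop (𝓝 (s, x)) := (hq.comp hns).comp hφmono.tendsto_atTop
    have hφt' : Tendsto (fun k => Y (Q k)) atTop (𝓝 yl) := hφt
    have hQ1 : Tendsto (fun k => (Q k).1) atTop (𝓝 s) := (continuous_fst.tendsto (s, x)).comp hQt
    have hQ2 : Tendsto (fun k => (Q k).2) atTop (𝓝 x) := (continuous_snd.tendsto (s, x)).comp hQt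
    have hmaxl : IsMaxOn (g (s, x)) P yl := by
      rw [isMaxOn_iff]
      intro z hz
      have hgz : Continuous (fun q : ℝ × E n => g q z) := by
        simp only [hg]
        exact (continuous_snd.inner continuous_const).sub
          (continuous_const.add (continuous_fst.mul continuous_const))
      have t1 : Tendsto (fun k => g (Q k) z) atTop (𝓝 (g (s, x) z)) :=
        (hgz.tendsto (s, x)).comp hQt
      have hYin : Tendsto (fun k => Y (Q k)) atTop (𝓝[P] yl) :=
        tendsto_nhdsWithin_iff.mpr ⟨hφt', Filter.Eventually.of_forall fun k => hYP (Q k)⟩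
      have hu₀Y : Tendsto (fun k => u₀ (Y (Q k))) atTop (𝓝 (u₀ yl)) :=
        (hu₀ yl hylP).tendsto.comp hYin
      have hudY : Tendsto (fun k => udot (Y (Q k))) atTop (𝓝 (udot yl)) :=
        (hud yl hylP).tendsto.comp hφt'
      have t2 : Tendsto (fun k => g (Q k) (Y (Q k))) atTop (𝓝 (g (s, x) yl)) := by
        simp only [hg]
        exact (hQ2.inner hφt').sub (hu₀Y.add (hQ1.mul hudY))
      exact le_of_tendsto_of_tendsto' t1 t2 fun k => hYmax (Q k) hz
    have hyl : yl = y₀ := (key yl hylP hmaxl).symm.trans hgrad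
    exact ⟨φ, hyl ▸ hφt'⟩
  -- the candidate total derivative
  set L : ℝ × E n →L[ℝ] ℝ :=
    (innerSL ℝ y₀).comp (ContinuousLinearMap.snd ℝ ℝ (E n))
      - (udot y₀) • ContinuousLinearMap.fst ℝ ℝ (E n) with hL
  have hLapp : ∀ w : ℝ × E n, L w = ⟪w.2, y₀⟫ - w.1 * udot y₀ := by
    intro w
    simp [hL, real_inner_comm, mul_comm]
  -- error bounds
  have herr1 : ∀ q : ℝ × E n, 0 ≤ ψ q.1 q.2 - ψ s x - L (q - (s, x)) := by
    intro q
    have h1 : g q y₀ ≤ ψ q.1 q.2 := hle q y₀ hy₀P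
    have h2 : ψ s x = g (s, x) y₀ := hψY (s, x)
    have h3 : L (q - (s, x)) = ⟪(q - (s, x)).2, y₀⟫ - (q - (s, x)).1 * udot y₀ := hLapp _
    have h3' : L (q - (s, x)) = ⟪q.2 - x, y₀⟫ - (q.1 - s) * udot y₀ := h3
    have h4 : ⟪q.2 - x, y₀⟫ = ⟪q.2, y₀⟫ - ⟪x, y₀⟫ := inner_sub_left _ _ _
    simp only [hg] at h1 h2
    rw [h2, h3', h4]
    have hexp : (q.1 - s) * udot y₀ = q.1 * udot y₀ - s * udot y₀ := by ring
    linarith [h1, hexp]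
  have herr2 : ∀ q : ℝ × E n, ψ q.1 q.2 - ψ s x - L (q - (s, x))
      ≤ ⟪q.2 - x, Y q - y₀⟫ - (q.1 - s) * (udot (Y q) - udot y₀) := by
    intro q
    have h1 : ψ q.1 q.2 = g q (Y q) := hψY q
    have h2 : g (s, x) (Y q) ≤ ψ s x := hle (s, x) (Y q) (hYP q)
    have h3 : L (q - (s, x)) = ⟪(q - (s, x)).2, y₀⟫ - (q - (s, x)).1 * udot y₀ := hLapp _
    have h3' : L (q - (s, x)) = ⟪q.2 - x, y₀⟫ - (q.1 - s) * udot y₀ := h3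
    have h4 : ⟪q.2 - x, Y q - y₀⟫ = ⟪q.2, Y q⟫ - ⟪x, Y q⟫ - (⟪q.2, y₀⟫ - ⟪x, y₀⟫) := by
      rw [inner_sub_left, inner_sub_right, inner_sub_right]; ring
    have h5 : ⟪q.2 - x, y₀⟫ = ⟪q.2, y₀⟫ - ⟪x, y₀⟫ := inner_sub_left _ _ _
    simp only [hg] at h1 h2
    rw [h1, h3', h4, h5]
    have hexp : (q.1 - s) * (udot (Y q) - udot y₀)
        = q.1 * udot (Y q) - q.1 * udot y₀ - s * udot (Y q) + s * udot y₀ := by ring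
    have hexp2 : (q.1 - s) * udot y₀ = q.1 * udot y₀ - s * udot y₀ := by ring
    linarith [h2, hexp, hexp2]
  -- little-o estimate
  have hlittle : (fun q : ℝ × E n => ψ q.1 q.2 - ψ s x - L (q - (s, x)))
      =o[𝓝 (s, x)] fun q : ℝ × E n => q - (s, x) := by
    rw [Asymptotics.isLittleO_iff]
    intro c hc
    have hcv : Tendsto (fun q => ‖Y q - y₀‖ + |udot (Y q) - udot y₀|) (𝓝 (s, x)) (𝓝 0) := by
      have hY0 : Tendsto (fun q => Y q - y₀) (𝓝 (s, x)) (𝓝 (y₀ - y₀)) :=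
        hYtendsto.sub tendsto_const_nhds
      rw [sub_self] at hY0
      have hud0 : Tendsto (fun q => udot (Y q) - udot y₀) (𝓝 (s, x)) (𝓝 (udot y₀ - udot y₀)) :=
        ((hud y₀ hy₀P).tendsto.comp hYtendsto).sub tendsto_const_nhds
      rw [sub_self] at hud0
      simpa using (hY0.norm.add hud0.abs)
    filter_upwards [hcv.eventually_le_const hc] with q hq
    have hb1 : 0 ≤ ψ q.1 q.2 - ψ s x - L (q - (s, x)) := herr1 q
    have hb2 : ψ q.1 q.2 - ψ s x - L (q - (s, x))
        ≤ ⟪q.2 - x, Y q - y₀⟫ - (q.1 - s) * (udot (Y q) - udot y₀) := herr2 q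
    have hin : ⟪q.2 - x, Y q - y₀⟫ ≤ ‖q.2 - x‖ * ‖Y q - y₀‖ := real_inner_le_norm _ _
    have hab : -((q.1 - s) * (udot (Y q) - udot y₀)) ≤ |q.1 - s| * |udot (Y q) - udot y₀| := by
      rw [← abs_mul]
      exact neg_le_abs _
    have hfst : |q.1 - s| ≤ ‖q - (s, x)‖ := by
      have h := norm_fst_le (q - (s, x))
      have h2 : ‖(q - (s, x)).1‖ = |q.1 - s| := rfl
      rw [h2] at h
      exact h
    have hsnd : ‖q.2 - x‖ ≤ ‖q - (s, x)‖ := by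
      have h := norm_snd_le (q - (s, x))
      have h2 : (q - (s, x)).2 = q.2 - x := rfl
      rw [h2] at h
      exact h
    have hnn : (0:ℝ) ≤ ‖q - (s, x)‖ := norm_nonneg _
    have hbound : ψ q.1 q.2 - ψ s x - L (q - (s, x))
        ≤ ‖q - (s, x)‖ * (‖Y q - y₀‖ + |udot (Y q) - udot y₀|) := by
      have e1 : ⟪q.2 - x, Y q - y₀⟫ ≤ ‖q - (s, x)‖ * ‖Y q - y₀‖ :=
        hin.trans (mul_le_mul_of_nonneg_right hsnd (norm_nonneg _))
      have e2 : -((q.1 - s) * (udot (Y q) - udot y₀)) ≤ ‖q - (s, x)‖ * |udot (Y q) - udot y₀| :=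
        hab.trans (mul_le_mul_of_nonneg_right hfst (abs_nonneg _))
      have hexp3 : ‖q - (s, x)‖ * (‖Y q - y₀‖ + |udot (Y q) - udot y₀|)
          = ‖q - (s, x)‖ * ‖Y q - y₀‖ + ‖q - (s, x)‖ * |udot (Y q) - udot y₀| := by ring
      linarith [e1, e2, hb2, hexp3]
    rw [Real.norm_eq_abs, abs_of_nonneg hb1]
    calc ψ q.1 q.2 - ψ s x - L (q - (s, x))
        ≤ ‖q - (s, x)‖ * (‖Y q - y₀‖ + |udot (Y q) - udot y₀|) := hbound
      _ ≤ ‖q - (s, x)‖ * c := mul_le_mul_of_nonneg_left hq hnn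
      _ = c * ‖q - (s, x)‖ := mul_comm _ _
  have hFD : HasFDerivAt (fun q : ℝ × E n => ψ q.1 q.2) L (s, x) := by
    exact HasFDerivAt.of_isLittleO hlittle
  constructor
  · exact hFD.differentiableAt
  · have hcurve : HasDerivAt (fun t : ℝ => ((t, x) : ℝ × E n)) ((1:ℝ), (0:E n)) s :=
      (hasDerivAt_id s).prodMk (hasDerivAt_const s x)
    have hcomp : HasDerivAt (fun t => ψ t x) (L ((1:ℝ), (0:E n))) s :=
      by have := hFD.comp_hasDerivAt s hcurve; exact this
    have hval : L ((1:ℝ), (0:E n)) = - udot y₀ := by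
      rw [hLapp]; simp
    rw [hcomp.deriv, hval, hgrad]

/-- If `ψ_s` is differentiable at `x` (`s > 0`), then `ψ` is
differentiable at `(s,x)` and `∂ψ/∂s(s,x) = −u̇₀(∇ψ_s(x))`; consequently the regular
locus of `ψ` over `(0,∞) × ℝⁿ` is the indexed union of the regular loci of the `ψ_s`. -/
theorem partial_C1_regularity
    {n d : ℕ} (hn : 1 ≤ n)
    (v : Fin d → E n) (lam : Fin d → ℝ) (P : Set (E n))
    (hP : GoodPolytope v lam P)
    (u₀ udot : E n → ℝ) (hD : GoodData v lam P u₀ udot)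
    (u : ℝ → E n → ℝ) (hu : ∀ s y, u s y = u₀ y + s * udot y)
    (A : ℝ → Set (E n)) (hA : ∀ s, A s = {y ∈ P | u s y ≠ biconj P (u s) y})
    (ψ : ℝ → E n → ℝ) (hψ : ∀ s x, ψ s x = sSup {r : ℝ | ∃ y ∈ P, r = ⟪x, y⟫ - u s y}) :
    (∀ s : ℝ, 0 < s → ∀ x : E n, DifferentiableAt ℝ (ψ s) x →
      DifferentiableAt ℝ (fun q : ℝ × E n => ψ q.1 q.2) (s, x) ∧
      deriv (fun t => ψ t x) s = - udot (gradient (ψ s) x)) ∧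
    {p : ℝ × E n | 0 < p.1 ∧ DifferentiableAt ℝ (fun q : ℝ × E n => ψ q.1 q.2) p}
      = ⋃ s ∈ Ioi (0:ℝ), ({s} : Set ℝ) ×ˢ {x : E n | DifferentiableAt ℝ (ψ s) x} := by
  obtain ⟨hPeq, hPc, hPint, -, -⟩ := hP
  obtain ⟨⟨U, hUopen, hPU, F, hF, hu₀F⟩, -, -, -, V, hVopen, hPV, hudot⟩ := hD
  have hPne : P.Nonempty := hPint.mono interior_subset
  have hu₀c : ContinuousOn u₀ P := by
    have huG : Continuous (uG v lam) := by
      unfold uG lfun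
      exact continuous_finset_sum _ fun k _ =>
        Real.continuous_mul_log.comp
          ((continuous_id.inner continuous_const).sub continuous_const)
    exact (huG.continuousOn.add (hF.continuousOn.mono hPU)).congr hu₀F
  have hudc : ∀ y ∈ P, ContinuousAt udot y := fun y hy =>
    hudot.continuousOn.continuousAt (hVopen.mem_nhds (hPV hy))
  have hψ' : ∀ s x, ψ s x = sSup {r : ℝ | ∃ y ∈ P, r = ⟪x, y⟫ - (u₀ y + s * udot y)} := by
    intro s x
    simp only [hψ, hu]
  have main : ∀ (s : ℝ) (x : E n), DifferentiableAt ℝ (ψ s) x →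
      DifferentiableAt ℝ (fun q : ℝ × E n => ψ q.1 q.2) (s, x) ∧
        deriv (fun t => ψ t x) s = - udot (gradient (ψ s) x) := fun s x hd =>
    core_lemma_aux hPc hPne hu₀c hudc ψ hψ' s x hd
  refine ⟨fun s _ x hd => main s x hd, ?_⟩
  ext p
  simp only [mem_setOf_eq, mem_iUnion, mem_prod, mem_singleton_iff, mem_Ioi, exists_prop]
  constructor
  · rintro ⟨hp1, hp2⟩
    refine ⟨p.1, hp1, rfl, ?_⟩
    exact DifferentiableAt.comp (g := fun q : ℝ × E n => ψ q.1 q.2) p.2 hp2 ((differentiableAt_const (𝕜 := ℝ) (x := p.2) p.1).prodMk (differentiableAt_id (𝕜 := ℝ) (x := p.2)))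
  · rintro ⟨t, ht, h1, h2⟩
    refine ⟨h1 ▸ ht, ?_⟩
    have hp : p = (t, p.2) := Prod.ext h1 rfl
    rw [hp]
    exact (main t p.2 h2).1
end
end

section
/- Let s > 0 and y ∈ int P. Suppose λ₁, …, λ_{n+1} ≥ 0 with Σ_{i=1}^{n+1} λᵢ = 1 and y₁, …, y_{n+1} ∈ P satisfy y = Σ_{i=1}^{n+1} λᵢ yᵢ and u_s**(y) = Σ_{i=1}^{n+1} λᵢ u_s(yᵢ). Then yᵢ ∈ int P for every index i with λᵢ > 0. -/
noncomputable section

open Set MeasureTheory Topology Filter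
open scoped RealInnerProductSpace Pointwise

lemma lfun_continuous {n d : ℕ} (v : Fin d → E n) (lam : Fin d → ℝ) (k : Fin d) :
    Continuous (lfun v lam k) := by
  exact (continuous_id.inner continuous_const).sub continuous_const

lemma lfun_affine {n d : ℕ} (v : Fin d → E n) (lam : Fin d → ℝ) (k : Fin d)
    (a b : E n) (t : ℝ) :
    lfun v lam k (a + t • (b - a)) = lfun v lam k a + t * (lfun v lam k b - lfun v lam k a) := by
  simp only [lfun, inner_add_left, inner_sub_left, real_inner_smul_left]
  ring

lemma uG_continuous {n d : ℕ} (v : Fin d → E n) (lam : Fin d → ℝ) :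
    Continuous (uG v lam) := by
  apply continuous_finset_sum
  intro k _
  exact Real.continuous_mul_log.comp (lfun_continuous v lam k)

lemma mem_interior_of_lpos {n d : ℕ} (v : Fin d → E n) (lam : Fin d → ℝ)
    (P : Set (E n)) (hPeq : P = Pset v lam) (z : E n)
    (h : ∀ k, 0 < lfun v lam k z) : z ∈ interior P := by
  have hW : IsOpen (⋂ k, (lfun v lam k) ⁻¹' Ioi (0:ℝ)) :=
    isOpen_iInter_of_finite fun k => (lfun_continuous v lam k).isOpen_preimage _ isOpen_Ioi
  have hsub : (⋂ k, (lfun v lam k) ⁻¹' Ioi (0:ℝ)) ⊆ P := by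
    intro x hx
    rw [hPeq]
    intro k
    exact le_of_lt (mem_iInter.mp hx k)
  exact interior_maximal hsub hW (mem_iInter.mpr fun k => h k)

lemma lpos_of_mem_interior {n d : ℕ} (hn : 1 ≤ n) (v : Fin d → E n) (lam : Fin d → ℝ)
    (P : Set (E n)) (hPeq : P = Pset v lam)
    (hfacet : ∀ k, Module.finrank ℝ (affineSpan ℝ (P ∩ {y | lfun v lam k y = 0})).direction = n - 1)
    (y : E n) (hy : y ∈ interior P) : ∀ k, 0 < lfun v lam k y := by
  intro k
  have hyP : y ∈ P := interior_subset hy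
  have hy0 : 0 ≤ lfun v lam k y := by rw [hPeq] at hyP; exact hyP k
  by_cases hv : v k = 0
  · -- lfun is constant −lam k
    have hconst : ∀ x : E n, lfun v lam k x = -lam k := by
      intro x; simp [lfun, hv]
    rcases lt_or_eq_of_le hy0 with h | h
    · rw [hconst]; rw [hconst] at h; linarith [h]
    · exfalso
      have hall : P ∩ {x | lfun v lam k x = 0} = P := by
        apply inter_eq_left.mpr
        intro x _
        rw [mem_setOf_eq, hconst, ← hconst y, ← h]
      have hspan : affineSpan ℝ P = ⊤ := by
        apply affineSpan_eq_top_of_nonempty_interior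
        obtain ⟨p, hp⟩ : (interior P).Nonempty := ⟨y, hy⟩
        exact ⟨p, interior_mono (subset_convexHull ℝ P) hp⟩
      have := hfacet k
      rw [hall, hspan, AffineSubspace.direction_top] at this
      rw [finrank_top, finrank_euclideanSpace_fin] at this
      omega
  · -- move in direction −v k
    obtain ⟨ε, hε, hball⟩ := Metric.mem_nhds_iff.mp (isOpen_interior.mem_nhds hy)
    have hvn : (0:ℝ) < ‖v k‖ := norm_pos_iff.mpr hv
    set z := y - (ε / 2 * ‖v k‖⁻¹) • v k with hzdef
    have hzball : z ∈ Metric.ball y ε := by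
      rw [Metric.mem_ball, dist_eq_norm]
      have : z - y = -((ε / 2 * ‖v k‖⁻¹) • v k) := by rw [hzdef]; abel
      rw [this, norm_neg, norm_smul, Real.norm_eq_abs]
      rw [abs_of_pos (by positivity)]
      rw [mul_assoc, inv_mul_cancel₀ (ne_of_gt hvn), mul_one]
      linarith
    have hzP : z ∈ P := interior_subset (hball hzball)
    rw [hPeq] at hzP
    have hzk := hzP k
    have hcalc : lfun v lam k z = lfun v lam k y - (ε / 2) * ‖v k‖ := by
      rw [hzdef]
      simp only [lfun, inner_sub_left, real_inner_smul_left]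
      rw [real_inner_self_eq_norm_sq]
      field_simp
      ring
    rw [hcalc] at hzk
    nlinarith

lemma biconj_le_combo {n : ℕ} (P : Set (E n)) (hPc : IsCompact P) (hPne : P.Nonempty)
    (g : E n → ℝ) (hg : ContinuousOn g P) (y : E n) {m : ℕ}
    (lam' : Fin m → ℝ) (hl0 : ∀ i, 0 ≤ lam' i) (hl1 : ∑ i, lam' i = 1)
    (z : Fin m → E n) (hz : ∀ i, z i ∈ P) (hy : y = ∑ i, lam' i • z i) :
    biconj P g y ≤ ∑ i, lam' i * g (z i) := by
  obtain ⟨x₀, hx₀, hmin⟩ := hPc.exists_isMinOn hPne hg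
  apply csSup_le
  · refine ⟨g x₀, 0, g x₀, fun w hw => ?_, by simp⟩
    simpa using hmin hw
  · rintro r ⟨a, c, hac, rfl⟩
    have h2 : ∀ i, a (lam' i • z i) = lam' i * a (z i) := fun i => by
      rw [_root_.map_smul]; rfl
    have h1 : a y + c = ∑ i, lam' i * (a (z i) + c) := by
      rw [hy, map_sum]
      simp only [h2, mul_add]
      rw [Finset.sum_add_distrib, ← Finset.sum_mul, hl1, one_mul]
    rw [h1]
    apply Finset.sum_le_sum
    intro i _
    exact mul_le_mul_of_nonneg_left (hac (z i) (hz i)) (hl0 i)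

lemma tendsto_slope_right {f : ℝ → ℝ} {D : ℝ} (h : HasDerivAt f D 0) :
    Tendsto (fun t => (f t - f 0) / t) (𝓝[>] 0) (𝓝 D) := by
  have h1 := hasDerivAt_iff_tendsto_slope.mp h
  have h2 : Tendsto (slope f 0) (𝓝[>] 0) (𝓝 D) :=
    h1.mono_left (nhdsWithin_mono 0 fun x hx => ne_of_gt hx)
  apply h2.congr
  intro t
  rw [slope_def_field]
  ring_nf

lemma slope_limit_regular {α β : ℝ} (hα : 0 < α) :
    Tendsto (fun t => ((α + t * (β - α)) * Real.log (α + t * (β - α)) - α * Real.log α) / t)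
      (𝓝[>] 0) (𝓝 ((Real.log α + 1) * (β - α))) := by
  have h1 : HasDerivAt (fun t : ℝ => α + t * (β - α)) (β - α) 0 :=
    (hasDerivAt_mul_const (β - α)).const_add α
  have h2 : HasDerivAt (fun x : ℝ => x * Real.log x) (Real.log α + 1) (α + 0 * (β - α)) := by
    simpa using Real.hasDerivAt_mul_log (ne_of_gt hα)
  have h3 := h2.comp 0 h1
  have h4 := tendsto_slope_right h3
  simp only [Function.comp] at h4
  simpa using h4

lemma slope_limit_smooth {n : ℕ} {G : E n → ℝ} {x w : E n} (h : DifferentiableAt ℝ G x) :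
    Tendsto (fun t => (G (x + t • w) - G x) / t) (𝓝[>] 0)
      (𝓝 (fderiv ℝ G x (w))) := by
  have hlin : HasDerivAt (fun t : ℝ => x + t • w) w 0 := by
    simpa using ((hasDerivAt_id (0:ℝ)).smul_const w).const_add x
  have hG : HasFDerivAt G (fderiv ℝ G x) ((fun t : ℝ => x + t • w) 0) := by
    simpa using h.hasFDerivAt
  have h3 := hG.comp_hasDerivAt 0 hlin
  have h4 := tendsto_slope_right h3
  simpa using h4

/-- If `y ∈ int P` is written as a convex combination
`y = Σ λᵢ yᵢ` of points `yᵢ ∈ P` with `u_s**(y) = Σ λᵢ u_s(yᵢ)`, then every point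
`yᵢ` with `λᵢ > 0` ("called upon" by `y`) lies in `int P`. -/
theorem called_upon_points_interior
    {n d : ℕ} (hn : 1 ≤ n)
    (v : Fin d → E n) (lam : Fin d → ℝ) (P : Set (E n))
    (hP : GoodPolytope v lam P)
    (u₀ udot : E n → ℝ) (hD : GoodData v lam P u₀ udot)
    (u : ℝ → E n → ℝ) (hu : ∀ s y, u s y = u₀ y + s * udot y)
    (A : ℝ → Set (E n)) (hA : ∀ s, A s = {y ∈ P | u s y ≠ biconj P (u s) y})
    (s : ℝ) (hs : 0 < s) (y : E n) (hy : y ∈ interior P)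
    (lam' : Fin (n + 1) → ℝ) (hl0 : ∀ i, 0 ≤ lam' i) (hl1 : ∑ i, lam' i = 1)
    (ys : Fin (n + 1) → E n) (hys : ∀ i, ys i ∈ P)
    (hconv : y = ∑ i, lam' i • ys i)
    (hval : biconj P (u s) y = ∑ i, lam' i * u s (ys i)) :
    ∀ i, 0 < lam' i → ys i ∈ interior P := by
  classical
  obtain ⟨hPeq, hPc, hPint, hfacet, -⟩ := hP
  obtain ⟨⟨U1, hU1o, hPU1, F, hF, hu0F⟩, -, -, -, ⟨U2, hU2o, hPU2, hudot⟩⟩ := hD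
  set G : E n → ℝ := fun x => F x + s * udot x with hGdef
  have hyP : y ∈ P := interior_subset hy
  have hβ : ∀ k, 0 < lfun v lam k y := lpos_of_mem_interior hn v lam P hPeq hfacet y hy
  by_contra hcon
  push_neg at hcon
  obtain ⟨i₀, hi₀, hno⟩ := hcon
  have hαnn : ∀ i k, 0 ≤ lfun v lam k (ys i) := by
    intro i k
    have := hys i
    rw [hPeq] at this
    exact this k
  obtain ⟨k₀, hk₀⟩ : ∃ k, lfun v lam k (ys i₀) = 0 := by
    by_contra h2
    push_neg at h2
    exact hno (mem_interior_of_lpos v lam P hPeq _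
      (fun k => lt_of_le_of_ne (hαnn i₀ k) (Ne.symm (h2 k))))
  set z : Fin (n + 1) → ℝ → E n := fun i t => ys i + t • (y - ys i) with hzdef
  set φ : ℝ → ℝ := fun t => ∑ i, lam' i * u s (z i t) with hφdef
  have hlz : ∀ i k t, lfun v lam k (z i t)
      = lfun v lam k (ys i) + t * (lfun v lam k y - lfun v lam k (ys i)) := by
    intro i k t
    rw [hzdef]
    exact lfun_affine v lam k (ys i) y t
  have hz0 : ∀ i, z i 0 = ys i := by intro i; simp [hzdef]
  have hzP : ∀ i, ∀ t ∈ Icc (0:ℝ) 1, z i t ∈ P := by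
    intro i t ht
    rw [hPeq]
    intro k
    rw [hlz i k t]
    nlinarith [hαnn i k, hβ k, ht.1, ht.2]
  have hsum : ∀ t : ℝ, ∑ i, lam' i • z i t = y := by
    intro t
    have e : ∀ i, lam' i • z i t = (1 - t) • (lam' i • ys i) + t • (lam' i • y) := by
      intro i
      rw [hzdef]
      module
    rw [Finset.sum_congr rfl (fun i _ => e i), Finset.sum_add_distrib,
      ← Finset.smul_sum, ← Finset.smul_sum, ← Finset.sum_smul, hl1, one_smul, ← hconv]
    module
  have hPne : P.Nonempty := ⟨y, hyP⟩
  have husc : ContinuousOn (u s) P := by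
    have h1 : ContinuousOn (fun x => uG v lam x + (F x + s * udot x)) P :=
      ((uG_continuous v lam).continuousOn.add ((hF.continuousOn.mono hPU1).add
        (continuousOn_const.mul (hudot.continuousOn.mono hPU2))))
    apply h1.congr
    intro x hx
    rw [hu, hu0F x hx]
    ring
  have hmin : ∀ t ∈ Icc (0:ℝ) 1, φ 0 ≤ φ t := by
    intro t ht
    have h1 : biconj P (u s) y ≤ ∑ i, lam' i * u s (z i t) :=
      biconj_le_combo P hPc hPne (u s) husc y lam' hl0 hl1 (fun i => z i t)
        (fun i => hzP i t ht) (hsum t).symm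
    have h0 : φ 0 = biconj P (u s) y := by
      rw [hval, hφdef]
      exact Finset.sum_congr rfl fun i _ => by rw [hz0]
    rw [h0]
    exact h1
  have hus : ∀ x ∈ P, u s x
      = (∑ k, lfun v lam k x * Real.log (lfun v lam k x)) + G x := by
    intro x hx
    rw [hu, hu0F x hx, hGdef]
    simp only [uG]
    ring
  have hφdec : ∀ t ∈ Icc (0:ℝ) 1, φ t = ∑ i, lam' i *
      ((∑ k, lfun v lam k (z i t) * Real.log (lfun v lam k (z i t))) + G (z i t)) := by
    intro t ht
    rw [hφdef]
    exact Finset.sum_congr rfl fun i _ => by rw [hus _ (hzP i t ht)]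
  have hφ0 : φ 0 = ∑ i, lam' i *
      ((∑ k, lfun v lam k (ys i) * Real.log (lfun v lam k (ys i))) + G (ys i)) := by
    rw [hφdec 0 ⟨le_refl 0, zero_le_one⟩]
    exact Finset.sum_congr rfl fun i _ => by rw [hz0]
  -- the singular/regular decomposition
  set Q : Fin (n + 1) × Fin d → ℝ → ℝ := fun p t => lam' p.1 *
    (((lfun v lam p.2 (ys p.1) + t * (lfun v lam p.2 y - lfun v lam p.2 (ys p.1))) *
        Real.log (lfun v lam p.2 (ys p.1) + t * (lfun v lam p.2 y - lfun v lam p.2 (ys p.1)))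
      - lfun v lam p.2 (ys p.1) * Real.log (lfun v lam p.2 (ys p.1))) / t) with hQdef
  set R : Fin (n + 1) → ℝ → ℝ := fun i t => lam' i * ((G (z i t) - G (ys i)) / t) with hRdef
  set S : Finset (Fin (n + 1) × Fin d) :=
    Finset.univ.filter (fun p => 0 < lam' p.1 ∧ lfun v lam p.2 (ys p.1) = 0) with hSdef
  set Sc : Finset (Fin (n + 1) × Fin d) :=
    Finset.univ.filter (fun p => ¬(0 < lam' p.1 ∧ lfun v lam p.2 (ys p.1) = 0)) with hScdef
  set T : ℝ → ℝ := fun t =>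
    (∑ p ∈ S, Q p t) + ((∑ p ∈ Sc, Q p t) + ∑ i, R i t) with hTdef
  have hTeq : ∀ t ∈ Ioo (0:ℝ) 1, (φ t - φ 0) / t = T t := by
    intro t ht
    have ht0 : t ≠ 0 := ne_of_gt ht.1
    rw [hφdec t ⟨ht.1.le, ht.2.le⟩, hφ0, hTdef]
    simp only
    rw [← add_assoc, Finset.sum_filter_add_sum_filter_not, Fintype.sum_prod_type]
    rw [← Finset.sum_sub_distrib, Finset.sum_div, ← Finset.sum_add_distrib]
    apply Finset.sum_congr rfl
    intro i _
    simp only [hQdef, hRdef, hlz i]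
    have e1 : lam' i * (((∑ k, (lfun v lam k (ys i) + t * (lfun v lam k y - lfun v lam k (ys i))) *
            Real.log (lfun v lam k (ys i) + t * (lfun v lam k y - lfun v lam k (ys i))))
          - ∑ k, lfun v lam k (ys i) * Real.log (lfun v lam k (ys i))) / t)
        = ∑ k, lam' i *
        (((lfun v lam k (ys i) + t * (lfun v lam k y - lfun v lam k (ys i))) *
          Real.log (lfun v lam k (ys i) + t * (lfun v lam k y - lfun v lam k (ys i)))
          - lfun v lam k (ys i) * Real.log (lfun v lam k (ys i))) / t) := by
      rw [← Finset.sum_sub_distrib, Finset.sum_div, Finset.mul_sum]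
    rw [← e1]
    field_simp
    ring
  -- limits
  have hsing : Tendsto (fun t => ∑ p ∈ S, Q p t) (𝓝[>] (0:ℝ)) atBot := by
    have hCc : 0 < ∑ p ∈ S, lam' p.1 * lfun v lam p.2 y := by
      apply Finset.sum_pos'
      · intro p _
        exact mul_nonneg (hl0 _) (hβ _).le
      · exact ⟨(i₀, k₀), Finset.mem_filter.mpr ⟨Finset.mem_univ _, hi₀, hk₀⟩,
          mul_pos hi₀ (hβ k₀)⟩
    have hbase : Tendsto (fun t => (∑ p ∈ S, lam' p.1 * lfun v lam p.2 y) * Real.log t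
        + ∑ p ∈ S, lam' p.1 * lfun v lam p.2 y * Real.log (lfun v lam p.2 y))
        (𝓝[>] (0:ℝ)) atBot :=
      (Real.tendsto_log_nhdsGT_zero.const_mul_atBot hCc).atBot_add
        tendsto_const_nhds
    apply hbase.congr'
    filter_upwards [self_mem_nhdsWithin] with t ht
    rw [Finset.sum_mul, ← Finset.sum_add_distrib]
    apply Finset.sum_congr rfl
    intro p hp
    rw [hSdef, Finset.mem_filter] at hp
    obtain ⟨-, hpos, hα0⟩ := hp
    have hβp := hβ p.2
    have ht' : (0:ℝ) < t := ht
    rw [hQdef]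
    simp only [hα0, sub_zero, zero_add, zero_mul]
    rw [Real.log_mul (ne_of_gt ht') (ne_of_gt hβp)]
    field_simp
  have hGdiff : ∀ i, DifferentiableAt ℝ G (ys i) := by
    intro i
    have hFd : DifferentiableAt ℝ F (ys i) :=
      (hF.contDiffAt (hU1o.mem_nhds (hPU1 (hys i)))).differentiableAt (by simp)
    have hud : DifferentiableAt ℝ udot (ys i) :=
      (hudot.contDiffAt (hU2o.mem_nhds (hPU2 (hys i)))).differentiableAt (by simp)
    exact hFd.add (hud.const_mul s)
  have hRlim : ∀ i : Fin (n + 1), Tendsto (R i) (𝓝[>] (0:ℝ))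
      (𝓝 (lam' i * (fderiv ℝ G (ys i) (y - ys i)))) := by
    intro i
    exact (slope_limit_smooth (hGdiff i)).const_mul (lam' i)
  have hQlim : ∀ p ∈ Sc, ∃ L, Tendsto (Q p) (𝓝[>] (0:ℝ)) (𝓝 L) := by
    rintro ⟨i, k⟩ hp
    rw [hScdef, Finset.mem_filter] at hp
    by_cases hlze : lam' i = 0
    · refine ⟨0, ?_⟩
      have : Q (i, k) = fun _ => (0:ℝ) := by
        funext t
        rw [hQdef]
        simp [hlze]
      rw [this]
      exact tendsto_const_nhds
    · have hpos : 0 < lam' i := (hl0 i).lt_of_ne (Ne.symm hlze)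
      have hα : lfun v lam k (ys i) ≠ 0 := fun h => hp.2 ⟨hpos, h⟩
      have hαpos : 0 < lfun v lam k (ys i) := (hαnn i k).lt_of_ne (Ne.symm hα)
      exact ⟨_, (slope_limit_regular hαpos (β := lfun v lam k y)).const_mul (lam' i)⟩
  set L : Fin (n + 1) × Fin d → ℝ :=
    fun p => if h : p ∈ Sc then (hQlim p h).choose else 0 with hLdef
  have hScsum : Tendsto (fun t => ∑ p ∈ Sc, Q p t) (𝓝[>] (0:ℝ)) (𝓝 (∑ p ∈ Sc, L p)) := by
    apply tendsto_finset_sum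
    intro p hp
    rw [hLdef]
    simp only [dif_pos hp]
    exact (hQlim p hp).choose_spec
  have hRsum : Tendsto (fun t => ∑ i, R i t) (𝓝[>] (0:ℝ))
      (𝓝 (∑ i, lam' i * (fderiv ℝ G (ys i) (y - ys i)))) :=
    tendsto_finset_sum _ fun i _ => hRlim i
  have hT : Tendsto T (𝓝[>] (0:ℝ)) atBot := by
    rw [hTdef]
    exact hsing.atBot_add (hScsum.add hRsum)
  have hslope : Tendsto (fun t => (φ t - φ 0) / t) (𝓝[>] (0:ℝ)) atBot := by
    apply hT.congr'
    filter_upwards [Ioo_mem_nhdsGT_of_mem (show (0:ℝ) ∈ Ico (0:ℝ) 1 from ⟨le_refl 0, one_pos⟩)]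
      with t ht
    exact (hTeq t ht).symm
  have hneg : ∀ᶠ t in 𝓝[>] (0:ℝ), (φ t - φ 0) / t < 0 := hslope.eventually_lt_atBot 0
  have hpos' : ∀ᶠ t in 𝓝[>] (0:ℝ), 0 ≤ (φ t - φ 0) / t := by
    filter_upwards [Ioo_mem_nhdsGT_of_mem (show (0:ℝ) ∈ Ico (0:ℝ) 1 from ⟨le_refl 0, one_pos⟩)]
      with t ht
    exact div_nonneg (sub_nonneg.mpr (hmin t ⟨ht.1.le, ht.2.le⟩)) ht.1.le
  obtain ⟨t, h1, h2⟩ := (hneg.and hpos').exists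
  linarith
end
end

section
/- For each s ≥ 0, the gradient of u_s (which is smooth on the interior of P) maps the interior of P onto ℝⁿ: ∇u_s(int P) = ℝⁿ. -/
noncomputable section

open Set MeasureTheory Topology Filter
open scoped RealInnerProductSpace Pointwise

section Aux
variable {n d : ℕ}

lemma lfun_cont (v : Fin d → E n) (lam : Fin d → ℝ) (k : Fin d) :
    Continuous (lfun v lam k) := by
  unfold lfun
  exact (continuous_id.inner continuous_const).sub continuous_const

lemma uG_cont (v : Fin d → E n) (lam : Fin d → ℝ) : Continuous (uG v lam) := by
  unfold uG
  exact continuous_finset_sum _ fun k _ =>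
    Real.continuous_mul_log.comp (lfun_cont v lam k)

lemma lfun_line (v : Fin d → E n) (lam : Fin d → ℝ) (k : Fin d) (y₀ p : E n) (t : ℝ) :
    lfun v lam k (y₀ + t • (p - y₀))
      = lfun v lam k y₀ + t * (lfun v lam k p - lfun v lam k y₀) := by
  unfold lfun
  rw [inner_add_left, real_inner_smul_left, inner_sub_left]
  ring

lemma interior_pos {v : Fin d → E n} {lam : Fin d → ℝ} {P : Set (E n)}
    (hPeq : P = Pset v lam) {p : E n} (hp : p ∈ interior P) {k : Fin d}
    (hk : v k ≠ 0) : 0 < lfun v lam k p := by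
  have hpP : p ∈ P := interior_subset hp
  have h0 : 0 ≤ lfun v lam k p := by rw [hPeq] at hpP; exact hpP k
  rcases h0.lt_or_eq with h | h
  · exact h
  · exfalso
    obtain ⟨ε, hε, hball⟩ := Metric.mem_nhds_iff.mp (mem_interior_iff_mem_nhds.mp hp)
    have hnv : (0:ℝ) < ‖v k‖ := norm_pos_iff.mpr hk
    set c : ℝ := ε / (2 * ‖v k‖) with hc
    have hcpos : 0 < c := div_pos hε (by positivity)
    set q : E n := p - c • v k with hq
    have hqP : q ∈ P := by
      apply hball
      have : dist q p = c * ‖v k‖ := by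
        rw [dist_eq_norm]
        have : q - p = -(c • v k) := by rw [hq]; abel
        rw [this, norm_neg, norm_smul, Real.norm_eq_abs, abs_of_pos hcpos]
      rw [Metric.mem_ball, this, hc]
      rw [div_mul_eq_mul_div]
      rw [div_lt_iff₀ (by positivity)]
      nlinarith
    have : lfun v lam k q = lfun v lam k p - c * ‖v k‖ ^ 2 := by
      rw [hq]
      unfold lfun
      rw [inner_sub_left, real_inner_smul_left, real_inner_self_eq_norm_sq]
      ring
    have hneg : lfun v lam k q < 0 := by
      rw [this, ← h]
      have : 0 < c * ‖v k‖ ^ 2 := by positivity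
      linarith
    rw [hPeq] at hqP
    exact absurd (hqP k) (not_le.mpr hneg)

lemma not_interior_exists {v : Fin d → E n} {lam : Fin d → ℝ} {P : Set (E n)}
    (hPeq : P = Pset v lam) (hPne : P.Nonempty) {y₀ : E n}
    (hy₀ : y₀ ∈ P) (hni : y₀ ∉ interior P) :
    ∃ k, v k ≠ 0 ∧ lfun v lam k y₀ = 0 := by
  classical
  set O : Set (E n) := ⋂ k, {y | v k ≠ 0 → 0 < lfun v lam k y} with hO
  have hOopen : IsOpen O := by
    apply isOpen_iInter_of_finite
    intro k
    by_cases hk : v k = 0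
    · have : {y : E n | v k ≠ 0 → 0 < lfun v lam k y} = univ := by
        ext y; simp [hk]
      rw [this]; exact isOpen_univ
    · have : {y : E n | v k ≠ 0 → 0 < lfun v lam k y} = {y | 0 < lfun v lam k y} := by
        ext y; simp [hk]
      rw [this]
      exact isOpen_lt continuous_const (lfun_cont v lam k)
  have hOP : O ⊆ P := by
    intro y hy
    rw [hPeq]
    intro k
    by_cases hk : v k = 0
    · obtain ⟨z, hz⟩ := hPne
      rw [hPeq] at hz
      have hz' := hz k
      have e1 : lfun v lam k y = -lam k := by simp [lfun, hk, inner_zero_right]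
      have e2 : lfun v lam k z = -lam k := by simp [lfun, hk, inner_zero_right]
      rw [e1, ← e2]; exact hz'
    · exact le_of_lt (mem_iInter.mp hy k hk)
  have hyO : y₀ ∉ O := fun h => hni (interior_maximal hOP hOopen h)
  rw [hO] at hyO
  simp only [mem_iInter, mem_setOf_eq, not_forall] at hyO
  obtain ⟨k, hk⟩ := hyO
  obtain ⟨hkv, hkl⟩ := hk
  refine ⟨k, hkv, le_antisymm (not_lt.mp hkl) ?_⟩
  rw [hPeq] at hy₀
  exact hy₀ k

set_option maxHeartbeats 1000000 in
lemma boundary_not_min {v : Fin d → E n} {lam : Fin d → ℝ} {P U U' : Set (E n)}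
    (hPeq : P = Pset v lam)
    (hUo : IsOpen U) (hPU : P ⊆ U) {F : E n → ℝ} (hF : ContDiffOn ℝ (⊤:ℕ∞) F U)
    (hU'o : IsOpen U') (hPU' : P ⊆ U') {ud : E n → ℝ} (hud : ContDiffOn ℝ (⊤:ℕ∞) ud U')
    (s : ℝ) (x : E n) {y₀ p : E n} (hy₀ : y₀ ∈ P) (hp : p ∈ interior P)
    (hni : y₀ ∉ interior P) :
    ¬ IsMinOn (fun y => (uG v lam y + F y) + s * ud y - ⟪x, y⟫) P y₀ := by
  classical
  intro hmin
  obtain ⟨k₀, hk₀v, hk₀⟩ := not_interior_exists hPeq ⟨p, interior_subset hp⟩ hy₀ hni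
  set g : E n → ℝ := fun y => (uG v lam y + F y) + s * ud y - ⟪x, y⟫ with hg
  set w : E n := p - y₀ with hw
  set Y : ℝ → E n := fun t => y₀ + t • w with hY
  set a : Fin d → ℝ := fun k => lfun v lam k y₀ with ha
  set c : Fin d → ℝ := fun k => lfun v lam k p with hc
  have hakn : ∀ k, 0 ≤ a k := by rw [hPeq] at hy₀; exact hy₀
  have hckn : ∀ k, 0 ≤ c k := by
    have h := interior_subset hp; rw [hPeq] at h; exact h
  set m : Fin d → ℝ → ℝ := fun k t => a k + t * (c k - a k) with hm
  have hlY : ∀ (k : Fin d) (t : ℝ), lfun v lam k (Y t) = m k t := fun k t =>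
    lfun_line v lam k y₀ p t
  have hYP : ∀ t ∈ Icc (0:ℝ) 1, Y t ∈ P := by
    intro t ht
    rw [hPeq]; intro k
    rw [hlY k t]
    have := hakn k; have := hckn k
    have ht0 := ht.1; have ht1 := ht.2
    simp only [hm]
    nlinarith
  set S : Finset (Fin d) := Finset.univ.filter (fun k => a k ≠ 0) with hS
  set T : Finset (Fin d) := Finset.univ.filter (fun k => a k = 0) with hT
  set H : ℝ → ℝ := fun t => (∑ k ∈ S, m k t * Real.log (m k t))
      + (F (Y t) + s * ud (Y t) - ⟪x, Y t⟫) with hH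
  have hY0 : Y 0 = y₀ := by simp [hY]
  have hYdiff : Differentiable ℝ Y := by
    apply (differentiable_const y₀).add
    exact (differentiable_id (𝕜 := ℝ) (E := ℝ)).smul (differentiable_const w)
  have hHdiff : DifferentiableAt ℝ H 0 := by
    apply DifferentiableAt.add
    · apply DifferentiableAt.fun_sum
      intro k hk
      have hak0 : a k ≠ 0 := by
        have := (Finset.mem_filter.mp hk).2; exact this
      have hmd : HasDerivAt (fun t => m k t) (c k - a k) 0 := by
        have h1 : HasDerivAt (fun t : ℝ => t * (c k - a k)) (c k - a k) 0 := by
          simpa using (hasDerivAt_id (0:ℝ)).mul_const (c k - a k)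
        simpa [hm] using h1.const_add (a k)
      have hm0 : m k 0 ≠ 0 := by simpa [hm] using hak0
      exact ((Real.hasDerivAt_mul_log hm0).comp 0 hmd).differentiableAt
    · have hFd : DifferentiableAt ℝ F (Y 0) := by
        rw [hY0]
        exact (hF.differentiableOn (by simp)).differentiableAt (hUo.mem_nhds (hPU hy₀))
      have hudd : DifferentiableAt ℝ ud (Y 0) := by
        rw [hY0]
        exact (hud.differentiableOn (by simp)).differentiableAt (hU'o.mem_nhds (hPU' hy₀))
      have h1 : DifferentiableAt ℝ (fun t => F (Y t)) 0 := hFd.comp 0 (hYdiff 0)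
      have h2 : DifferentiableAt ℝ (fun t => ud (Y t)) 0 := hudd.comp 0 (hYdiff 0)
      have h3 : DifferentiableAt ℝ (fun t => ⟪x, Y t⟫) 0 :=
        (differentiableAt_const x).inner ℝ (hYdiff 0)
      exact (h1.add (h2.const_mul s)).sub h3
  obtain ⟨D, hHD⟩ : ∃ D, HasDerivAt H D 0 := ⟨deriv H 0, hHdiff.hasDerivAt⟩
  obtain ⟨δ, hδ, hball⟩ := Metric.eventually_nhds_iff.mp
    (Asymptotics.IsLittleO.def (hasDerivAt_iff_isLittleO.mp hHD) one_pos)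
  set B : ℝ := |D| + 1 with hB
  have hHbound : ∀ t : ℝ, 0 < t → t < δ → H t - H 0 ≤ t * B := by
    intro t ht htδ
    have hstep := hball (y := t) (by simpa [Real.dist_eq, abs_of_pos ht] using htδ)
    rw [sub_zero] at hstep
    simp only [smul_eq_mul, one_mul, Real.norm_eq_abs] at hstep
    have h1 : H t - H 0 - t * D ≤ |t| := (le_abs_self _).trans hstep
    rw [abs_of_pos ht] at h1
    have h2 : t * D ≤ t * |D| := mul_le_mul_of_nonneg_left (le_abs_self D) ht.le
    rw [hB]; nlinarith
  set c₀ : ℝ := c k₀ with hc₀def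
  have hc₀ : 0 < c₀ := interior_pos hPeq hp hk₀v
  set Cc : ℝ := (∑ k, c k) + 1 with hCc
  have hCcpos : 0 < Cc := by
    have : 0 ≤ ∑ k, c k := Finset.sum_nonneg fun k _ => hckn k
    rw [hCc]; linarith
  set τ : ℝ := min (min (δ/2) 1) (min (1/Cc) (Real.exp ((-(B+1))/c₀) / c₀)) with hτdef
  have hτpos : 0 < τ :=
    lt_min (lt_min (by linarith) one_pos) (lt_min (by positivity) (by positivity))
  have hτδ : τ < δ :=
    lt_of_le_of_lt ((min_le_left _ _).trans (min_le_left _ _)) (by linarith)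
  have hτ1 : τ ≤ 1 := (min_le_left _ _).trans (min_le_right _ _)
  have hτC : ∀ k, τ * c k ≤ 1 := by
    intro k
    have h1 : τ ≤ 1/Cc := (min_le_right _ _).trans (min_le_left _ _)
    have h2 : c k ≤ Cc := by
      rw [hCc]
      have := Finset.single_le_sum (f := c) (fun k _ => hckn k) (Finset.mem_univ k)
      linarith
    calc τ * c k ≤ (1/Cc) * Cc :=
          mul_le_mul h1 h2 (hckn k) (by positivity)
      _ = 1 := by field_simp
  have hτlog : c₀ * Real.log (τ * c₀) ≤ -(B+1) := by
    have h1 : τ ≤ Real.exp ((-(B+1))/c₀) / c₀ := (min_le_right _ _).trans (min_le_right _ _)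
    have h2 : τ * c₀ ≤ Real.exp ((-(B+1))/c₀) := by
      rw [← le_div_iff₀ hc₀]; exact h1
    have h3 : Real.log (τ * c₀) ≤ (-(B+1))/c₀ := by
      rw [Real.log_le_iff_le_exp (by positivity)]; exact h2
    calc c₀ * Real.log (τ * c₀) ≤ c₀ * ((-(B+1))/c₀) :=
          mul_le_mul_of_nonneg_left h3 hc₀.le
      _ = -(B+1) := by field_simp
  have hsum : ∀ t : ℝ, uG v lam (Y t) = ∑ k, m k t * Real.log (m k t) := by
    intro t; unfold uG; exact Finset.sum_congr rfl fun k _ => by rw [hlY k t]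
  have hgH : ∀ t : ℝ, g (Y t) = H t + ∑ k ∈ T, m k t * Real.log (m k t) := by
    intro t
    have hsplit : ∑ k, m k t * Real.log (m k t)
        = (∑ k ∈ S, m k t * Real.log (m k t)) + ∑ k ∈ T, m k t * Real.log (m k t) := by
      rw [hS, hT, ← Finset.sum_filter_add_sum_filter_not Finset.univ (fun k => a k ≠ 0)
        (fun k => m k t * Real.log (m k t))]
      congr 2
      ext k; simp
    simp only [hg, hH]
    rw [hsum t, hsplit]; ring
  have hak₀ : a k₀ = 0 := hk₀
  have hk₀T : k₀ ∈ T := by rw [hT]; simp [hak₀]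
  have hm0 : m k₀ τ = τ * c₀ := by simp [hm, hak₀, hc₀def]
  have hTτ : ∑ k ∈ T, m k τ * Real.log (m k τ) ≤ m k₀ τ * Real.log (m k₀ τ) := by
    rw [← Finset.add_sum_erase T _ hk₀T]
    have hrest : ∑ k ∈ T.erase k₀, m k τ * Real.log (m k τ) ≤ 0 := by
      apply Finset.sum_nonpos
      intro k hk
      have hak : a k = 0 := by
        have := (Finset.mem_filter.mp (Finset.mem_of_mem_erase hk)).2; exact this
      have hmk : m k τ = τ * c k := by simp [hm, hak]
      have h0 : 0 ≤ m k τ := by rw [hmk]; exact mul_nonneg hτpos.le (hckn k)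
      have h1 : m k τ ≤ 1 := by rw [hmk]; exact hτC k
      have hlg := Real.log_nonpos h0 h1
      exact mul_nonpos_iff.mpr (Or.inl ⟨h0, hlg⟩)
    linarith
  have hfin : g (Y τ) < g y₀ := by
    have e0 : g y₀ = H 0 := by
      have h := hgH 0
      rw [hY0] at h
      rw [h]
      have hz : ∑ k ∈ T, m k 0 * Real.log (m k 0) = 0 := by
        apply Finset.sum_eq_zero
        intro k hk
        have hak : a k = 0 := by
          have := (Finset.mem_filter.mp hk).2; exact this
        simp [hm, hak]
      rw [hz, add_zero]
    have e1 : g (Y τ) ≤ H τ + m k₀ τ * Real.log (m k₀ τ) := by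
      rw [hgH τ]; linarith
    have e2 : H τ ≤ H 0 + τ * B := by
      have := hHbound τ hτpos hτδ; linarith
    have e3 : m k₀ τ * Real.log (m k₀ τ) = τ * (c₀ * Real.log (τ * c₀)) := by
      rw [hm0]; ring
    have e4 : τ * (c₀ * Real.log (τ * c₀)) ≤ τ * (-(B+1)) :=
      mul_le_mul_of_nonneg_left hτlog hτpos.le
    rw [e0]
    calc g (Y τ) ≤ H τ + m k₀ τ * Real.log (m k₀ τ) := e1
      _ ≤ H 0 + τ * B + τ * (-(B+1)) := by rw [e3]; linarith
      _ = H 0 - τ := by ring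
      _ < H 0 := by linarith
  exact absurd (isMinOn_iff.mp hmin _ (hYP τ ⟨hτpos.le, hτ1⟩)) (not_le.mpr hfin)

lemma innerSL_eq_toDual (x : E n) :
    (innerSL ℝ x : E n →L[ℝ] ℝ) = InnerProductSpace.toDual ℝ (E n) x := by
  ext y; simp [InnerProductSpace.toDual_apply_apply]

theorem main_test
    {n d : ℕ} (hn : 1 ≤ n)
    (v : Fin d → E n) (lam : Fin d → ℝ) (P : Set (E n))
    (hPeq : P = Pset v lam) (hPc : IsCompact P) (hPint : (interior P).Nonempty)
    (u₀ udot : E n → ℝ)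
    (U : Set (E n)) (hUo : IsOpen U) (hPU : P ⊆ U)
    (F : E n → ℝ) (hF : ContDiffOn ℝ (⊤:ℕ∞) F U) (hFeq : ∀ y ∈ P, u₀ y = uG v lam y + F y)
    (hu₀sm : ContDiffOn ℝ (⊤:ℕ∞) u₀ (interior P))
    (U' : Set (E n)) (hU'o : IsOpen U') (hPU' : P ⊆ U')
    (hud : ContDiffOn ℝ (⊤:ℕ∞) udot U')
    (u : ℝ → E n → ℝ) (hu : ∀ s y, u s y = u₀ y + s * udot y) :
    ∀ s : ℝ, 0 ≤ s → (fun y => gradient (u s) y) '' interior P = univ := by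
  intro s _hs
  rw [Set.eq_univ_iff_forall]
  intro x
  obtain ⟨p, hp⟩ := hPint
  have hPne : P.Nonempty := ⟨p, interior_subset hp⟩
  set f : E n → ℝ := fun y => u₀ y + s * udot y - ⟪x, y⟫ with hf
  set g : E n → ℝ := fun y => (uG v lam y + F y) + s * udot y - ⟪x, y⟫ with hg
  have hfg : ∀ y ∈ P, f y = g y := by
    intro y hy; simp only [hf, hg]; rw [hFeq y hy]
  have hgc : ContinuousOn g P := by
    apply ContinuousOn.sub
    · apply ContinuousOn.add
      · exact ((uG_cont v lam).continuousOn).add ((hF.continuousOn).mono hPU)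
      · exact continuousOn_const.mul ((hud.continuousOn).mono hPU')
    · exact ((continuous_const.inner continuous_id)).continuousOn
  obtain ⟨y₀, hy₀P, hmin⟩ := hPc.exists_isMinOn hPne hgc
  have hy₀int : y₀ ∈ interior P := by
    by_contra hni
    exact boundary_not_min hPeq hUo hPU hF hU'o hPU' hud s x hy₀P hp hni hmin
  have hminf : IsMinOn f P y₀ := by
    apply isMinOn_iff.mpr
    intro z hz
    rw [hfg y₀ hy₀P, hfg z hz]
    exact isMinOn_iff.mp hmin z hz
  have hloc : IsLocalMin f y₀ :=
    hminf.isLocalMin (mem_interior_iff_mem_nhds.mp hy₀int)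
  have hd₀ : DifferentiableAt ℝ u₀ y₀ :=
    (hu₀sm.differentiableOn (by simp)).differentiableAt
      (isOpen_interior.mem_nhds hy₀int)
  have hdud : DifferentiableAt ℝ udot y₀ :=
    (hud.differentiableOn (by simp)).differentiableAt
      (hU'o.mem_nhds (hPU' hy₀P))
  have hus : DifferentiableAt ℝ (fun y => u₀ y + s * udot y) y₀ :=
    hd₀.add (hdud.const_mul s)
  have hinner : HasFDerivAt (fun y : E n => ⟪x, y⟫) (innerSL ℝ x) y₀ := by
    have := (innerSL ℝ x).hasFDerivAt (x := y₀)
    exact this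
  have hfd : HasFDerivAt f
      (fderiv ℝ (fun y => u₀ y + s * udot y) y₀ - innerSL ℝ x) y₀ :=
    (hus.hasFDerivAt).sub hinner
  have h0 := hloc.hasFDerivAt_eq_zero hfd
  have husd : HasFDerivAt (fun y => u₀ y + s * udot y) (innerSL ℝ x) y₀ := by
    have he : fderiv ℝ (fun y => u₀ y + s * udot y) y₀ = innerSL ℝ x := by
      have := sub_eq_zero.mp h0; exact this
    rw [← he]; exact hus.hasFDerivAt
  have hgrad : HasGradientAt (u s) x y₀ := by
    have husf : u s = fun y => u₀ y + s * udot y := funext fun y => hu s y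
    rw [husf, hasGradientAt_iff_hasFDerivAt, ← innerSL_eq_toDual]
    exact husd
  exact ⟨y₀, hy₀int, hgrad.gradient⟩

end Aux

/-- For each `s ≥ 0`, the gradient of `u_s` maps `int P` onto ℝⁿ. -/
theorem gradient_us_surjective
    {n d : ℕ} (hn : 1 ≤ n)
    (v : Fin d → E n) (lam : Fin d → ℝ) (P : Set (E n))
    (hP : GoodPolytope v lam P)
    (u₀ udot : E n → ℝ) (hD : GoodData v lam P u₀ udot)
    (u : ℝ → E n → ℝ) (hu : ∀ s y, u s y = u₀ y + s * udot y)
    (A : ℝ → Set (E n)) (hA : ∀ s, A s = {y ∈ P | u s y ≠ biconj P (u s) y}) :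
    ∀ s : ℝ, 0 ≤ s → (fun y => gradient (u s) y) '' interior P = univ := by
  obtain ⟨hPeq, hPc, hPint, _, _⟩ := hP
  obtain ⟨⟨U, hUo, hPU, F, hF, hFeq⟩, _, hu₀sm, _, ⟨U', hU'o, hPU', hud⟩⟩ := hD
  exact main_test hn v lam P hPeq hPc hPint u₀ udot U hUo hPU F hF hFeq hu₀sm
    U' hU'o hPU' hud u hu
end
end

section
/- For each s > 0: (i) ∇u_s**(int P) = ⋃_{y ∈ int P} ∂u_s(y) = ℝⁿ. (ii) ⋃_{y ∈ (int P) ∖ A_s} ∂u_s(y) = ℝⁿ, and for every y ∈ (int P) ∖ A_s one has ∂u_s(y) = {∇u_s(y)} and ∇u_s**(y) = ∇u_s(y). -/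
noncomputable section

open Set MeasureTheory Topology Filter
open scoped RealInnerProductSpace Pointwise

namespace S12
open Metric
variable {n d : ℕ} {v : Fin d → E n} {lam : Fin d → ℝ}

lemma lfun_cont (k : Fin d) : Continuous (lfun v lam k) := by
  unfold lfun
  exact (continuous_id.inner continuous_const).sub continuous_const

lemma lfun_comb (k : Fin d) (x y : E n) (a b : ℝ) (hab : a + b = 1) :
    lfun v lam k (a • x + b • y) = a * lfun v lam k x + b * lfun v lam k y := by
  unfold lfun
  rw [inner_add_left, real_inner_smul_left, real_inner_smul_left]
  have : lam k = (a + b) * lam k := by rw [hab]; ring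
  nlinarith [this]

lemma Pset_convex : Convex ℝ (Pset v lam) := by
  intro x hx y hy a b ha hb hab k
  rw [lfun_comb k x y a b hab]
  have := hx k; have := hy k
  positivity

lemma mem_interior_of_pos {y : E n} (hy : ∀ k, 0 < lfun v lam k y) :
    y ∈ interior (Pset v lam) := by
  have ho : IsOpen {z : E n | ∀ k, 0 < lfun v lam k z} := by
    have : {z : E n | ∀ k, 0 < lfun v lam k z} = ⋂ k, {z : E n | 0 < lfun v lam k z} := by
      ext z; simp
    rw [this]
    exact isOpen_iInter_of_finite fun k => isOpen_lt continuous_const (lfun_cont k)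
  have hsub : {z : E n | ∀ k, 0 < lfun v lam k z} ⊆ Pset v lam := fun z hz k => (hz k).le
  exact interior_maximal hsub ho hy
lemma interior_pos (hn : 1 ≤ n)
    (hfacet : ∀ k, Module.finrank ℝ
      (affineSpan ℝ (Pset v lam ∩ {y | lfun v lam k y = 0})).direction = n - 1)
    {y : E n} (hy : y ∈ interior (Pset v lam)) (k : Fin d) : 0 < lfun v lam k y := by
  have hyP : y ∈ Pset v lam := interior_subset hy
  rcases (hyP k).lt_or_eq with h | h
  · exact h
  exfalso
  rcases Metric.mem_nhds_iff.mp (mem_interior_iff_mem_nhds.mp hy) with ⟨ε, hε, hball⟩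
  by_cases hv : v k = 0
  · -- l_k is identically 0
    have hlz : ∀ z : E n, lfun v lam k z = 0 := by
      intro z
      have : lam k = 0 := by
        have h0 : lfun v lam k y = -lam k := by simp [lfun, hv, inner_zero_right]
        rw [h0] at h; linarith
      simp [lfun, hv, inner_zero_right, this]
    have hPeq : Pset v lam ∩ {z | lfun v lam k z = 0} = Pset v lam := by
      ext z; simp [hlz]
    have hspan : affineSpan ℝ (Pset v lam) = ⊤ := by
      apply affineSpan_eq_top_of_nonempty_interior
      rw [(Pset_convex (v := v) (lam := lam)).convexHull_eq]
      exact ⟨y, hy⟩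
    have := hfacet k
    rw [hPeq, hspan] at this
    rw [AffineSubspace.direction_top] at this
    rw [finrank_top, finrank_euclideanSpace, Fintype.card_fin] at this
    omega
  · -- move against v k
    set u : E n := (‖v k‖)⁻¹ • v k with hu
    have hnu : ‖u‖ = 1 := by
      rw [hu, norm_smul, norm_inv, norm_norm, inv_mul_cancel₀ (norm_ne_zero_iff.mpr hv)]
    set z : E n := y - (ε / 2) • u with hz
    have hzball : z ∈ Metric.ball y ε := by
      rw [Metric.mem_ball, hz, dist_eq_norm]
      simp only [sub_sub_cancel_left, norm_neg, norm_smul, hnu, mul_one]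
      rw [Real.norm_eq_abs, abs_of_pos (by positivity)]
      linarith
    have hzP : z ∈ Pset v lam := hball hzball
    have : lfun v lam k z = -(ε / 2) * ‖v k‖ := by
      have hinner : ⟪u, v k⟫ = ‖v k‖ := by
        rw [hu, real_inner_smul_left, real_inner_self_eq_norm_sq]
        field_simp [norm_ne_zero_iff.mpr hv]
      simp only [lfun, hz, inner_sub_left, real_inner_smul_left, hinner]
      have : ⟪y, v k⟫ - lam k = 0 := h.symm
      linarith
    have h2 := hzP k
    rw [this] at h2
    nlinarith [norm_pos_iff.mpr hv, h2]

lemma uG_cont : Continuous (uG v lam) := by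
  refine continuous_finset_sum _ fun k _ => ?_
  exact Real.continuous_mul_log.comp (lfun_cont k)

lemma exists_interior_min (hn : 1 ≤ n)
    (hfacet : ∀ k, Module.finrank ℝ
      (affineSpan ℝ (Pset v lam ∩ {y | lfun v lam k y = 0})).direction = n - 1)
    (hPc : IsCompact (Pset v lam)) (hne : (interior (Pset v lam)).Nonempty)
    {U : Set (E n)} (hU : IsOpen U) (hPU : Pset v lam ⊆ U)
    {G : E n → ℝ} (hG : ContDiffOn ℝ (⊤ : ℕ∞) G U)
    {h : E n → ℝ} (hh : ∀ z ∈ Pset v lam, h z = uG v lam z + G z) :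
    ∃ y ∈ interior (Pset v lam), IsMinOn h (Pset v lam) y := by
  obtain ⟨z, hz⟩ := hne
  have hzP : z ∈ Pset v lam := interior_subset hz
  have hcont : ContinuousOn h (Pset v lam) :=
    ((uG_cont.continuousOn).add (hG.continuousOn.mono hPU)).congr hh
  obtain ⟨y, hyP, hmin⟩ := hPc.exists_isMinOn ⟨z, hzP⟩ hcont
  by_cases hyi : y ∈ interior (Pset v lam)
  · exact ⟨y, hyi, hmin⟩
  exfalso
  -- y is a boundary point: some l_k vanishes at y
  have hk0 : ∃ k, lfun v lam k y = 0 := by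
    by_contra hcon
    push_neg at hcon
    exact hyi (mem_interior_of_pos fun k => lt_of_le_of_ne (hyP k) (Ne.symm (hcon k)))
  obtain ⟨k₀, hk₀⟩ := hk0
  -- the active set
  set K : Finset (Fin d) := Finset.univ.filter (fun k => lfun v lam k y = 0) with hK
  have hk₀K : k₀ ∈ K := by simp [hK, hk₀]
  have hcz : ∀ k, 0 < lfun v lam k z := interior_pos hn hfacet hz
  -- the curve
  set γ : ℝ → E n := fun t => y + t • (z - y) with hγ
  have hγ0 : γ 0 = y := by simp [hγ]
  have hγP : ∀ t ∈ Icc (0:ℝ) 1, γ t ∈ Pset v lam := by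
    intro t ht
    have : γ t = (1 - t) • y + t • z := by
      simp [hγ, smul_sub, sub_smul]; abel
    rw [this]
    exact Pset_convex hyP hzP (by linarith [ht.2]) ht.1 (by ring)
  have hlγ : ∀ k t, lfun v lam k (γ t) = lfun v lam k y + t * ⟪z - y, v k⟫ := by
    intro k t
    simp only [hγ, lfun, inner_add_left, real_inner_smul_left]
    ring
  have hsub : ∀ k, ⟪z - y, v k⟫ = lfun v lam k z - lfun v lam k y := by
    intro k; simp only [lfun, inner_sub_left]; ring
  -- constants
  set C : ℝ := ∑ k ∈ K, lfun v lam k z with hC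
  have hCpos : 0 < C := Finset.sum_pos (fun k _ => hcz k) ⟨k₀, hk₀K⟩
  set D : ℝ := ∑ k ∈ K, lfun v lam k z * Real.log (lfun v lam k z) with hD
  -- remainder function
  set R : ℝ → ℝ := fun t =>
    (∑ k ∈ Kᶜ, (fun x => x * Real.log x) (lfun v lam k y + t * (lfun v lam k z - lfun v lam k y)))
    + t * D + G (γ t) with hR
  -- key decomposition on (0,1]
  have hdecomp : ∀ t ∈ Ioc (0:ℝ) 1, h (γ t) = C * (t * Real.log t) + R t := by
    intro t ht
    have htP : γ t ∈ Pset v lam := hγP t ⟨ht.1.le, ht.2⟩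
    rw [hh _ htP, hR, uG]
    have hsplit : (∑ k, lfun v lam k (γ t) * Real.log (lfun v lam k (γ t)))
        = (∑ k ∈ K, lfun v lam k (γ t) * Real.log (lfun v lam k (γ t)))
        + (∑ k ∈ Kᶜ, lfun v lam k (γ t) * Real.log (lfun v lam k (γ t))) :=
      (Finset.sum_add_sum_compl K _).symm
    rw [hsplit]
    have hKterm : ∀ k ∈ K, lfun v lam k (γ t) * Real.log (lfun v lam k (γ t))
        = lfun v lam k z * (t * Real.log t) + t * (lfun v lam k z * Real.log (lfun v lam k z)) := by
      intro k hkK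
      have hky : lfun v lam k y = 0 := by simpa [hK] using hkK
      have : lfun v lam k (γ t) = t * lfun v lam k z := by
        rw [hlγ, hsub, hky]; ring
      rw [this, Real.log_mul (ne_of_gt ht.1) (ne_of_gt (hcz k))]
      ring
    rw [Finset.sum_congr rfl hKterm, Finset.sum_add_distrib, ← Finset.sum_mul, ← Finset.mul_sum,
      ← hC, ← hD]
    have hKc : ∀ k ∈ Kᶜ, lfun v lam k (γ t) * Real.log (lfun v lam k (γ t))
        = (fun x => x * Real.log x) (lfun v lam k y + t * (lfun v lam k z - lfun v lam k y)) := by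
      intro k _
      rw [hlγ, hsub]
    rw [Finset.sum_congr rfl hKc]
    ring
  -- value at 0
  have hR0 : h y = R 0 := by
    have hRz : R 0 = (∑ k ∈ Kᶜ, lfun v lam k y * Real.log (lfun v lam k y)) + G y := by
      simp only [hR, hγ0, zero_mul, add_zero, mul_zero]
    rw [hh _ hyP, hRz, uG]
    have hsplit := (Finset.sum_add_sum_compl K
      (fun k => lfun v lam k y * Real.log (lfun v lam k y))).symm
    rw [hsplit]
    have h1 : (∑ k ∈ K, lfun v lam k y * Real.log (lfun v lam k y)) = 0 := by
      refine Finset.sum_eq_zero fun k hkK => ?_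
      have hky : lfun v lam k y = 0 := by simpa [hK] using hkK
      rw [hky]; ring
    rw [h1]
    ring
  -- R differentiable at 0
  have hRderiv : ∃ r₀ : ℝ, HasDerivAt R r₀ 0 := by
    have hsum : ∀ k ∈ Kᶜ, HasDerivAt (fun t : ℝ =>
        (fun x => x * Real.log x) (lfun v lam k y + t * (lfun v lam k z - lfun v lam k y)))
        ((Real.log (lfun v lam k y) + 1) * (lfun v lam k z - lfun v lam k y)) 0 := by
      intro k hkc
      have hky : lfun v lam k y ≠ 0 := by
        simp [hK] at hkc; exact hkc
      have hinner : HasDerivAt (fun t : ℝ => lfun v lam k y + t * (lfun v lam k z - lfun v lam k y))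
          (lfun v lam k z - lfun v lam k y) 0 :=
        ((hasDerivAt_mul_const _).const_add _)
      have h00 : (fun t : ℝ => lfun v lam k y + t * (lfun v lam k z - lfun v lam k y)) 0
          = lfun v lam k y := by norm_num
      have hlog : HasDerivAt (fun x => x * Real.log x) (Real.log (lfun v lam k y) + 1)
          ((fun t : ℝ => lfun v lam k y + t * (lfun v lam k z - lfun v lam k y)) 0) := by
        rw [h00]; exact Real.hasDerivAt_mul_log hky
      exact HasDerivAt.comp 0 hlog hinner
    have hS : HasDerivAt (fun t => ∑ k ∈ Kᶜ, (fun x => x * Real.log x)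
        (lfun v lam k y + t * (lfun v lam k z - lfun v lam k y)))
        (∑ k ∈ Kᶜ, (Real.log (lfun v lam k y) + 1) * (lfun v lam k z - lfun v lam k y)) 0 :=
      HasDerivAt.fun_sum hsum
    have htd : HasDerivAt (fun t : ℝ => t * D) D 0 := hasDerivAt_mul_const D
    have hGd : DifferentiableAt ℝ G y :=
      (hG.contDiffAt (hU.mem_nhds (hPU hyP))).differentiableAt (by simp)
    have hcurve : HasDerivAt γ (z - y) 0 := by
      have : HasDerivAt (fun t : ℝ => t • (z - y)) ((1:ℝ) • (z - y)) 0 :=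
        (hasDerivAt_id 0).smul_const (z - y)
      simpa [hγ] using this.const_add y
    have hGc : HasDerivAt (fun t => G (γ t)) (fderiv ℝ G y (z - y)) 0 := by
      have hF : HasFDerivAt G (fderiv ℝ G y) (γ 0) := by rw [hγ0]; exact hGd.hasFDerivAt
      exact hF.comp_hasDerivAt 0 hcurve
    exact ⟨_, (hS.add htd).add hGc⟩
  obtain ⟨r₀, hr₀⟩ := hRderiv
  -- slope of R tends to r₀
  have hslope : Tendsto (fun t => (R t - R 0) / t) (𝓝[>] (0:ℝ)) (𝓝 r₀) := by
    have := hasDerivAt_iff_tendsto_slope.mp hr₀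
    have h2 := this.mono_left (nhdsWithin_mono _ (by
      intro t ht
      exact ne_of_gt ht : Ioi (0:ℝ) ⊆ {(0:ℝ)}ᶜ))
    refine h2.congr fun t => ?_
    rw [slope_def_field]
    rw [sub_zero]
  -- C log t tends to -∞
  have hlogbot : Tendsto (fun t => C * Real.log t) (𝓝[>] (0:ℝ)) atBot := by
    have hl := Real.tendsto_log_nhdsNE_zero.mono_left (nhdsWithin_mono _ (by
      intro t ht; exact ne_of_gt ht : Ioi (0:ℝ) ⊆ {(0:ℝ)}ᶜ))
    exact Tendsto.const_mul_atBot hCpos hl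
  -- pick small t
  have hev1 : ∀ᶠ t in 𝓝[>] (0:ℝ), C * Real.log t < -(r₀ + 1) :=
    hlogbot.eventually (eventually_lt_atBot _)
  have hev2 : ∀ᶠ t in 𝓝[>] (0:ℝ), (R t - R 0) / t < r₀ + 1 :=
    hslope.eventually (eventually_lt_nhds (by linarith : r₀ < r₀ + 1))
  have hev3 : ∀ᶠ t in 𝓝[>] (0:ℝ), t ∈ Ioc (0:ℝ) 1 := by
    filter_upwards [Ioo_mem_nhdsGT_of_mem (by norm_num : (0:ℝ) ∈ Ico (0:ℝ) 1)] with t ht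
    exact ⟨ht.1, ht.2.le⟩
  obtain ⟨t, ht⟩ := ((hev1.and hev2).and hev3).exists
  obtain ⟨⟨ht1, ht2⟩, ht3⟩ := ht
  -- contradiction
  have htpos : 0 < t := ht3.1
  have hlt : h (γ t) < h y := by
    rw [hdecomp t ht3, hR0]
    have : C * (t * Real.log t) + R t - R 0 = t * (C * Real.log t + (R t - R 0) / t) := by
      field_simp
      ring
    have hneg : C * Real.log t + (R t - R 0) / t < 0 := by linarith
    have h5 : t * (C * Real.log t + (R t - R 0) / t) < 0 := mul_neg_of_pos_of_neg htpos hneg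
    have h6 : C * (t * Real.log t) + R t - R 0 < 0 := by rw [this]; exact h5
    linarith
  exact absurd (hmin (hγP t ⟨htpos.le, ht3.2⟩)) (not_le.mpr hlt)


section ConvexHelpers
variable {n : ℕ} {P : Set (E n)} {g : E n → ℝ} {y : E n}
def Sset (P : Set (E n)) (g : E n → ℝ) (y : E n) : Set ℝ :=
  {r : ℝ | ∃ (a : E n →L[ℝ] ℝ) (c : ℝ), (∀ z ∈ P, a z + c ≤ g z) ∧ r = a y + c}

lemma biconj_eq_sSup : biconj P g y = sSup (Sset P g y) := rfl

lemma bddAbove_Sset (hy : y ∈ P) : BddAbove (Sset P g y) := by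
  refine ⟨g y, fun r hr => ?_⟩
  obtain ⟨a, c, hmin, rfl⟩ := hr
  exact hmin y hy

lemma nonempty_Sset {m : ℝ} (hm : ∀ z ∈ P, m ≤ g z) : (Sset P g y).Nonempty :=
  ⟨m, 0, m, fun z hz => by simpa using hm z hz, by simp⟩

lemma biconj_le {m : ℝ} (hm : ∀ z ∈ P, m ≤ g z) (hy : y ∈ P) : biconj P g y ≤ g y :=
  csSup_le (nonempty_Sset hm) fun r hr => by
    obtain ⟨a, c, hmin, rfl⟩ := hr; exact hmin y hy

lemma le_biconj (hy : y ∈ P) {a : E n →L[ℝ] ℝ} {c : ℝ}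
    (hmin : ∀ z ∈ P, a z + c ≤ g z) : a y + c ≤ biconj P g y :=
  le_csSup (bddAbove_Sset hy) ⟨a, c, hmin, rfl⟩

/-- If `w` is a subgradient at `y ∈ P` then the convex envelope touches `g` at `y`. -/
lemma biconj_eq_of_subdiff {m : ℝ} (hm : ∀ z ∈ P, m ≤ g z) (hy : y ∈ P) {w : E n}
    (hw : w ∈ subdiff P g y) : biconj P g y = g y := by
  refine le_antisymm (biconj_le hm hy) ?_
  have h1 : ∀ z ∈ P, (innerSL ℝ w) z + (g y - ⟪w, y⟫) ≤ g z := by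
    intro z hz
    have h2 := hw z hz
    rw [inner_sub_right] at h2
    have e1 : (innerSL ℝ w) z = ⟪w, z⟫ := rfl
    rw [e1]; linarith
  have h3 := le_biconj hy h1
  have e2 : (innerSL ℝ w) y = ⟪w, y⟫ := rfl
  rw [e2] at h3; linarith

/-- Existence of a subgradient at an interior point where the envelope touches. -/
lemma exists_subdiff (hPc : IsCompact P) (hg : ContinuousOn g P)
    (hy : y ∈ interior P) (hbc : biconj P g y = g y) :
    ∃ w, w ∈ subdiff P g y := by
  have hyP : y ∈ P := interior_subset hy
  have hPne : P.Nonempty := ⟨y, hyP⟩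
  obtain ⟨xm, hxmP, hxm⟩ := hPc.exists_isMinOn hPne hg
  obtain ⟨xM, hxMP, hxM⟩ := hPc.exists_isMaxOn hPne hg
  have hm : ∀ z ∈ P, g xm ≤ g z := fun z hz => hxm hz
  -- ball inside P
  obtain ⟨ρ, hρ, hball⟩ := Metric.mem_nhds_iff.mp (mem_interior_iff_mem_nhds.mp hy)
  set ρ' := ρ / 2 with hρ'
  have hρ'pos : 0 < ρ' := by positivity
  have hcball : Metric.closedBall y ρ' ⊆ P := by
    refine subset_trans ?_ hball
    intro x hx
    rw [Metric.mem_closedBall] at hx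
    rw [Metric.mem_ball]
    linarith
  set M : ℝ := (g xM - g y + 1) / ρ' with hM
  have hMpos : 0 < M := by
    have h1 : g y ≤ g xM := hxM hyP
    have h2 : (0:ℝ) < g xM - g y + 1 := by linarith
    exact div_pos h2 hρ'pos
  -- approximate subgradients
  have hseq : ∀ j : ℕ, ∃ w : E n, ‖w‖ ≤ M ∧
      ∀ z ∈ P, g y - 1 / (j + 1) + ⟪w, z - y⟫ ≤ g z := by
    intro j
    have hεpos : (0:ℝ) < 1 / (j + 1) := by positivity
    have hlt : g y - 1 / (j + 1) < sSup (Sset P g y) := by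
      rw [← biconj_eq_sSup, hbc]; linarith
    obtain ⟨r, hrS, hrgt⟩ := exists_lt_of_lt_csSup (nonempty_Sset hm) hlt
    obtain ⟨a, c, hmin, rfl⟩ := hrS
    set w : E n := (InnerProductSpace.toDual ℝ (E n)).symm a with hw
    have hwa : ∀ x : E n, ⟪w, x⟫ = a x := fun x =>
      InnerProductSpace.toDual_symm_apply
    have hkey : ∀ z ∈ P, g y - 1 / (j + 1) + ⟪w, z - y⟫ ≤ g z := by
      intro z hz
      have h2 := hmin z hz
      rw [inner_sub_right, hwa z, hwa y]
      have : a y + c > g y - 1 / (j+1) := hrgt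
      linarith
    refine ⟨w, ?_, hkey⟩
    by_cases hw0 : w = 0
    · rw [hw0]; simpa using hMpos.le
    · set z : E n := y + ρ' • ‖w‖⁻¹ • w with hz
      have hzP : z ∈ P := by
        apply hcball
        rw [Metric.mem_closedBall, hz, dist_eq_norm]
        simp only [add_sub_cancel_left, norm_smul, norm_inv, norm_norm]
        rw [Real.norm_eq_abs, abs_of_pos hρ'pos]
        rw [inv_mul_cancel₀ (norm_ne_zero_iff.mpr hw0), mul_one]
      have h3 := hkey z hzP
      have hnn : ‖w‖ ≠ 0 := norm_ne_zero_iff.mpr hw0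
      have h4 : ⟪w, z - y⟫ = ρ' * ‖w‖ := by
        rw [hz]
        simp only [add_sub_cancel_left, real_inner_smul_right]
        rw [real_inner_self_eq_norm_sq]
        field_simp
      have h5 : g z ≤ g xM := hxM hzP
      rw [h4] at h3
      rw [hM, le_div_iff₀ hρ'pos]
      have hε1 : 1 / ((j:ℝ) + 1) ≤ 1 := by
        rw [div_le_one (by positivity)]; linarith [Nat.cast_nonneg (α := ℝ) j]
      have hcm : ‖w‖ * ρ' = ρ' * ‖w‖ := mul_comm _ _
      linarith
  choose wseq hwnorm hwkey using hseq
  have hbdd : ∀ j, wseq j ∈ Metric.closedBall (0 : E n) M := by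
    intro j; rw [Metric.mem_closedBall, dist_zero_right]; exact hwnorm j
  obtain ⟨w, -, φ, hφ, hwlim⟩ := tendsto_subseq_of_bounded Metric.isBounded_closedBall hbdd
  refine ⟨w, fun z hz => ?_⟩
  have hlim1 : Tendsto (fun j => g y - 1 / ((φ j : ℝ) + 1) + ⟪wseq (φ j), z - y⟫)
      atTop (𝓝 (g y - 0 + ⟪w, z - y⟫)) := by
    refine Tendsto.add (Tendsto.const_sub _ ?_) ?_
    · have h1 : Tendsto (fun j : ℕ => 1 / ((j : ℝ) + 1)) atTop (𝓝 0) :=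
        tendsto_one_div_add_atTop_nhds_zero_nat
      exact h1.comp (hφ.tendsto_atTop)
    · exact Tendsto.inner hwlim tendsto_const_nhds
  have hle : ∀ j : ℕ, g y - 1 / ((φ j : ℝ) + 1) + ⟪wseq (φ j), z - y⟫ ≤ g z := fun j =>
    hwkey (φ j) z hz
  have := le_of_tendsto hlim1 (Eventually.of_forall hle)
  simpa using this

/-- Uniqueness: at an interior point where `g` has a gradient, the subdifferential
is contained in the gradient singleton. -/
lemma subdiff_subset_singleton (hy : y ∈ interior P) {g' : E n}
    (hg : HasGradientAt g g' y) (w : E n) (hw : w ∈ subdiff P g y) : w = g' := by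
  have hPnhds : P ∈ 𝓝 y := mem_interior_iff_mem_nhds.mp hy
  set ψ : E n → ℝ := fun z => g z - ⟪w, z⟫ with hψ
  have hmin : IsLocalMin ψ y := by
    filter_upwards [hPnhds] with z hz
    have := hw z hz
    rw [inner_sub_right] at this
    simp only [hψ]
    linarith
  have hfd : HasFDerivAt ψ (InnerProductSpace.toDual ℝ (E n) g' - innerSL ℝ w) y := by
    have h1 : HasFDerivAt g (InnerProductSpace.toDual ℝ (E n) g') y :=
      hasGradientAt_iff_hasFDerivAt.mp hg
    have h2 : HasFDerivAt (fun z : E n => ⟪w, z⟫) (innerSL ℝ w) y :=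
      (innerSL ℝ w).hasFDerivAt
    exact h1.sub h2
  have hzero := hmin.hasFDerivAt_eq_zero hfd
  have happ : ∀ x : E n, ⟪g', x⟫ - ⟪w, x⟫ = 0 := by
    intro x
    have := congrFun (congrArg (fun L : E n →L[ℝ] ℝ => (L : E n → ℝ)) hzero) x
    simpa [InnerProductSpace.toDual_apply_apply, innerSL_apply_apply] using this
  have : ∀ x : E n, ⟪w - g', x⟫ = 0 := by
    intro x
    rw [inner_sub_left]
    have := happ x
    linarith
  have hwg : w - g' = 0 := by
    have := inner_self_eq_zero.mp (this (w - g'))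
    exact this
  rw [sub_eq_zero] at hwg
  exact hwg

/-- Sandwich: envelope is differentiable where it touches with matching gradient. -/
lemma sandwich_hasGradientAt {q : E n → ℝ} {w : E n}
    (hy : y ∈ interior P)
    (hle : ∀ z ∈ P, q z ≤ g z) (heq : q y = g y)
    (hlow : ∀ z ∈ P, g y + ⟪w, z - y⟫ ≤ q z)
    (hg : HasGradientAt g w y) : HasGradientAt q w y := by
  rw [hasGradientAt_iff_isLittleO] at hg ⊢
  have hPnhds : P ∈ 𝓝 y := mem_interior_iff_mem_nhds.mp hy
  have hbound : ∀ᶠ z in 𝓝 y, ‖q z - q y - ⟪w, z - y⟫‖ ≤ 1 * ‖g z - g y - ⟪w, z - y⟫‖ := by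
    filter_upwards [hPnhds] with z hz
    rw [one_mul, Real.norm_eq_abs, Real.norm_eq_abs]
    have h1 : 0 ≤ q z - q y - ⟪w, z - y⟫ := by
      have := hlow z hz; rw [heq]; linarith
    have h2 : q z - q y - ⟪w, z - y⟫ ≤ g z - g y - ⟪w, z - y⟫ := by
      have := hle z hz; rw [heq]; linarith
    rw [abs_of_nonneg h1, abs_of_nonneg (le_trans h1 h2)]
    exact h2
  exact (Asymptotics.isBigO_iff.mpr ⟨1, hbound⟩).trans_isLittleO hg
end ConvexHelpers
end S12

/-- For each `s > 0`: (i) `∇u_s**(int P) = ⋃_{y ∈ int P} ∂u_s(y) = ℝⁿ`;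
(ii) `⋃_{y ∈ int P ∖ A_s} ∂u_s(y) = ℝⁿ`, and on `int P ∖ A_s` one has
`∂u_s(y) = {∇u_s(y)}` and `∇u_s**(y) = ∇u_s(y)`. -/
theorem gradient_biconj_surjective
    {n d : ℕ} (hn : 1 ≤ n)
    (v : Fin d → E n) (lam : Fin d → ℝ) (P : Set (E n))
    (hP : GoodPolytope v lam P)
    (u₀ udot : E n → ℝ) (hD : GoodData v lam P u₀ udot)
    (u : ℝ → E n → ℝ) (hu : ∀ s y, u s y = u₀ y + s * udot y)
    (A : ℝ → Set (E n)) (hA : ∀ s, A s = {y ∈ P | u s y ≠ biconj P (u s) y}) :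
    ∀ s : ℝ, 0 < s →
      ((fun y => gradient (biconj P (u s)) y) '' interior P = univ ∧
        (⋃ y ∈ interior P, subdiff P (u s) y) = univ) ∧
      ((⋃ y ∈ (interior P) \ A s, subdiff P (u s) y) = univ ∧
        ∀ y ∈ (interior P) \ A s,
          subdiff P (u s) y = {gradient (u s) y} ∧
          gradient (biconj P (u s)) y = gradient (u s) y) := by
  classical
  intro s hs
  obtain ⟨hPeq, hPc, hPint, hfacet, -⟩ := hP
  subst hPeq
  obtain ⟨⟨U₁, hU₁o, hPU₁, F, hF, hu0F⟩, hconv, hu0sm, hhess, ⟨U₂, hU₂o, hPU₂, hudot⟩⟩ := hD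
  set P := Pset v lam with hPdef
  have hUo : IsOpen (U₁ ∩ U₂) := hU₁o.inter hU₂o
  have hPU : P ⊆ U₁ ∩ U₂ := subset_inter hPU₁ hPU₂
  -- decomposition of u s on P
  have hfP : ∀ z ∈ P, u s z = uG v lam z + (F z + s * udot z) := by
    intro z hz
    rw [hu s z, hu0F z hz]; ring
  have hGsm : ContDiffOn ℝ (⊤ : ℕ∞) (fun z => F z + s * udot z) (U₁ ∩ U₂) :=
    (hF.mono inter_subset_left).add (contDiffOn_const.mul (hudot.mono inter_subset_right))
  -- differentiability of u s on the interior
  have hfdiff : ∀ y ∈ interior P, DifferentiableAt ℝ (u s) y := by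
    intro y hy
    have h1 : DifferentiableAt ℝ u₀ y :=
      (hu0sm.contDiffAt (isOpen_interior.mem_nhds hy)).differentiableAt
        (by simp)
    have h2 : DifferentiableAt ℝ udot y :=
      (hudot.contDiffAt (hU₂o.mem_nhds (hPU₂ (interior_subset hy)))).differentiableAt
        (by simp)
    have heqf : u s = fun z => u₀ z + s * udot z := funext (hu s)
    rw [heqf]
    exact h1.add (h2.const_mul s)
  -- continuity of u s on P
  have hfcont : ContinuousOn (u s) P := by
    refine ContinuousOn.congr (((S12.uG_cont (v := v) (lam := lam)).continuousOn).add
      (hGsm.continuousOn.mono hPU)) ?_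
    intro z hz; exact hfP z hz
  have hPne : P.Nonempty := hPint.mono interior_subset
  obtain ⟨xm, hxmP, hxm⟩ := hPc.exists_isMinOn hPne hfcont
  have hm : ∀ z ∈ P, u s xm ≤ u s z := fun z hz => hxm hz
  -- key surjectivity construction
  have key : ∀ w : E n, ∃ y ∈ interior P, y ∉ A s ∧ w ∈ subdiff P (u s) y := by
    intro w
    have hGsm' : ContDiffOn ℝ (⊤ : ℕ∞) (fun z => F z + s * udot z - ⟪w, z⟫) (U₁ ∩ U₂) :=
      hGsm.sub (((innerSL ℝ w).contDiff).contDiffOn)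
    have hh : ∀ z ∈ P, (fun z => u s z - ⟪w, z⟫) z
        = uG v lam z + (fun z => F z + s * udot z - ⟪w, z⟫) z := by
      intro z hz
      simp only
      rw [hfP z hz]; ring
    obtain ⟨y, hyint, hymin⟩ := S12.exists_interior_min hn hfacet hPc hPint hUo hPU hGsm' hh
    have hwsub : w ∈ subdiff P (u s) y := by
      intro z hz
      have := hymin hz
      simp only at this
      rw [inner_sub_right]
      have h2 : u s y - ⟪w, y⟫ ≤ u s z - ⟪w, z⟫ := this
      linarith
    have hbc : biconj P (u s) y = u s y :=
      S12.biconj_eq_of_subdiff hm (interior_subset hyint) hwsub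
    refine ⟨y, hyint, ?_, hwsub⟩
    rw [hA s]
    rintro ⟨-, hne⟩
    exact hne hbc.symm
  -- pointwise identification on (interior P) \ A s
  have pt : ∀ y ∈ (interior P) \ A s,
      subdiff P (u s) y = {gradient (u s) y} ∧
      gradient (biconj P (u s)) y = gradient (u s) y := by
    rintro y ⟨hyint, hyA⟩
    have hyP : y ∈ P := interior_subset hyint
    have hbc : biconj P (u s) y = u s y := by
      by_contra hne
      exact hyA (by rw [hA s]; exact ⟨hyP, fun h => hne h.symm⟩)
    have hgr : HasGradientAt (u s) (gradient (u s) y) y := (hfdiff y hyint).hasGradientAt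
    obtain ⟨w, hw⟩ := S12.exists_subdiff hPc hfcont hyint hbc
    have hweq : w = gradient (u s) y := S12.subdiff_subset_singleton hyint hgr w hw
    have hgsub : gradient (u s) y ∈ subdiff P (u s) y := hweq ▸ hw
    have hsingle : subdiff P (u s) y = {gradient (u s) y} := by
      apply Set.eq_singleton_iff_unique_mem.mpr
      exact ⟨hgsub, fun w' hw' => S12.subdiff_subset_singleton hyint hgr w' hw'⟩
    refine ⟨hsingle, ?_⟩
    -- sandwich for the envelope
    have hlow : ∀ z ∈ P, u s y + ⟪gradient (u s) y, z - y⟫ ≤ biconj P (u s) z := by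
      intro z hz
      have h1 : ∀ z' ∈ P, (innerSL ℝ (gradient (u s) y)) z'
          + (u s y - ⟪gradient (u s) y, y⟫) ≤ u s z' := by
        intro z' hz'
        have h2 := hgsub z' hz'
        rw [inner_sub_right] at h2
        have e1 : (innerSL ℝ (gradient (u s) y)) z' = ⟪gradient (u s) y, z'⟫ := rfl
        rw [e1]; linarith
      have h3 := S12.le_biconj hz h1
      have e2 : (innerSL ℝ (gradient (u s) y)) z = ⟪gradient (u s) y, z⟫ := rfl
      rw [e2] at h3
      rw [inner_sub_right]
      linarith
    have hq : HasGradientAt (biconj P (u s)) (gradient (u s) y) y :=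
      S12.sandwich_hasGradientAt hyint (fun z hz => S12.biconj_le hm hz) hbc hlow hgr
    exact hq.gradient
  -- assemble the four statements
  refine ⟨⟨?_, ?_⟩, ?_, fun y hy => pt y hy⟩
  · apply Set.eq_univ_iff_forall.mpr
    intro w
    obtain ⟨y, hyint, hyA, hw⟩ := key w
    obtain ⟨hsingle, hgradeq⟩ := pt y ⟨hyint, hyA⟩
    have hweq : w = gradient (u s) y := by
      have := hsingle ▸ hw
      simpa using this
    exact ⟨y, hyint, by simp only []; rw [hgradeq, ← hweq]⟩
  · apply Set.eq_univ_iff_forall.mpr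
    intro w
    obtain ⟨y, hyint, -, hw⟩ := key w
    exact Set.mem_biUnion hyint hw
  · apply Set.eq_univ_iff_forall.mpr
    intro w
    obtain ⟨y, hyint, hyA, hw⟩ := key w
    exact Set.mem_biUnion ⟨hyint, hyA⟩ hw
end
end

section
/- Let 0 < s₁ < s₂. Then (closure of A_{s₁}) ∖ ∂P ⊂ interior of A_{s₂}, where closure, interior, and the boundary ∂P are taken in ℝⁿ. Moreover, ⋃_{s>0} A_s = {y ∈ P : u̇₀(y) ≠ (u̇₀)**(y)}, where (u̇₀)** is the biconjugate (convex envelope) of u̇₀ over P. -/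
noncomputable section

open Set MeasureTheory Topology Filter
open scoped RealInnerProductSpace Pointwise

section Tools

variable {n : ℕ}

lemma hasDerivAt_line {f : E n → ℝ} {y w : E n} {τ : ℝ}
    (hf : DifferentiableAt ℝ f (y + τ • w)) :
    HasDerivAt (fun t : ℝ => f (y + t • w)) ⟪gradient f (y + τ • w), w⟫ τ := by
  have hγ : HasDerivAt (fun t : ℝ => y + t • w) w τ := by
    simpa using ((hasDerivAt_id τ).smul_const w).const_add y
  have h2 := hf.hasGradientAt.hasFDerivAt.comp_hasDerivAt τ hγ
  simpa [InnerProductSpace.toDual_apply_apply, Function.comp_def] using h2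

lemma hasDerivAt_line_grad {f : E n → ℝ} {y w : E n} {τ : ℝ}
    (hf : DifferentiableAt ℝ (gradient f) (y + τ • w)) :
    HasDerivAt (fun t : ℝ => ⟪gradient f (y + t • w), w⟫)
      ⟪(fderiv ℝ (gradient f) (y + τ • w)) w, w⟫ τ := by
  have hγ : HasDerivAt (fun t : ℝ => y + t • w) w τ := by
    simpa using ((hasDerivAt_id τ).smul_const w).const_add y
  have h2 : HasDerivAt (fun t : ℝ => gradient f (y + t • w))
      ((fderiv ℝ (gradient f) (y + τ • w)) w) τ :=
    by have h := hf.hasFDerivAt.comp_hasDerivAt τ hγ; exact h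
  have h3 := ((innerSL ℝ (E := E n)).flip w).hasFDerivAt.comp_hasDerivAt τ h2
  simpa only [Function.comp_def, ContinuousLinearMap.flip_apply, innerSL_apply_apply] using h3

lemma diffAt_of_contDiffOn {f : E n → ℝ} {s : Set (E n)} (hs : IsOpen s)
    (hf : ContDiffOn ℝ (⊤ : ℕ∞) f s) {p : E n} (hp : p ∈ s) :
    DifferentiableAt ℝ f p :=
  (hf.contDiffAt (hs.mem_nhds hp)).differentiableAt (by simp)

lemma contDiffOn_gradient {f : E n → ℝ} {s : Set (E n)} (hs : IsOpen s)
    (hf : ContDiffOn ℝ (⊤ : ℕ∞) f s) :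
    ContDiffOn ℝ (⊤ : ℕ∞) (gradient f) s := by
  have h1 : ContDiffOn ℝ (⊤ : ℕ∞) (fderiv ℝ f) s := by
    have := hf.fderiv_of_isOpen (m := (⊤ : ℕ∞)) hs
    exact this (by exact_mod_cast le_top)
  have h2 : ContDiff ℝ (⊤ : ℕ∞)
      (fun a : E n →L[ℝ] ℝ => (InnerProductSpace.toDual ℝ (E n)).symm a) :=
    (InnerProductSpace.toDual ℝ (E n)).symm.contDiff
  exact fun x hx => (h2.contDiffAt.comp_contDiffWithinAt x (h1 x hx))

lemma gradDiffAt_of_contDiffOn {f : E n → ℝ} {s : Set (E n)} (hs : IsOpen s)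
    (hf : ContDiffOn ℝ (⊤ : ℕ∞) f s) {p : E n} (hp : p ∈ s) :
    DifferentiableAt ℝ (gradient f) p :=
  ((contDiffOn_gradient hs hf).contDiffAt (hs.mem_nhds hp)).differentiableAt (by simp)

lemma hess_continuousOn {f : E n → ℝ} {s : Set (E n)} (hs : IsOpen s)
    (hf : ContDiffOn ℝ (⊤ : ℕ∞) f s) :
    ContinuousOn (fderiv ℝ (gradient f)) s :=
  (contDiffOn_gradient hs hf).continuousOn_fderiv_of_isOpen hs (by exact_mod_cast le_top)

end Tools

section Tools2

variable {n : ℕ}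

lemma conv_grad_ineq {C : Set (E n)} {f : E n → ℝ}
    (hf : ConvexOn ℝ C f) {y z : E n} (hy : y ∈ C) (hz : z ∈ C) {dv : ℝ}
    (hd : HasDerivAt (fun t : ℝ => f (y + t • (z - y))) dv 0) :
    f y + dv ≤ f z := by
  set g : ℝ → ℝ := fun t : ℝ => f (y + t • (z - y)) with hg
  have hg0 : g 0 = f y := by simp [hg]
  have key : ∀ τ : ℝ, τ ∈ Ioc (0:ℝ) 1 → slope g 0 τ ≤ f z - f y := by
    intro τ hτ
    have hcombo : y + τ • (z - y) = (1 - τ) • y + τ • z := by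
      rw [smul_sub, sub_smul, one_smul]; abel
    have h2 := hf.2 hy hz (by linarith [hτ.2] : (0:ℝ) ≤ 1 - τ) (le_of_lt hτ.1)
      (by ring : (1 - τ) + τ = 1)
    have h3 : g τ ≤ (1 - τ) * f y + τ * f z := by
      rw [hg]; simp only [hcombo]; simpa [smul_eq_mul] using h2
    have h4 : slope g 0 τ = (g τ - g 0) / τ := by
      rw [slope_def_field]; ring_nf
    rw [h4, div_le_iff₀ hτ.1, hg0]; nlinarith [hτ.1]
  have hT : Tendsto (slope g 0) (𝓝[>] (0:ℝ)) (𝓝 dv) :=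
    (hasDerivAt_iff_tendsto_slope.1 hd).mono_left
      (nhdsWithin_mono 0 (fun x hx => ne_of_gt hx))
  have hle : dv ≤ f z - f y := by
    refine le_of_tendsto hT ?_
    filter_upwards [Ioc_mem_nhdsGT_of_mem (by constructor <;> norm_num : (0:ℝ) ∈ Ico (0:ℝ) 1)]
      with τ hτ using key τ hτ
  linarith

lemma deriv_zero_of_eventually_zero {g : ℝ → ℝ} {τ L : ℝ}
    (h : HasDerivAt g L τ) (h0 : ∀ᶠ t in 𝓝 τ, g t = 0) : L = 0 := by
  have h2 : HasDerivAt (fun _ : ℝ => (0:ℝ)) L τ :=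
    h.congr_of_eventuallyEq (by filter_upwards [h0] with t ht using ht.symm)
  exact (h2.unique (hasDerivAt_const τ 0)).symm ▸ rfl

lemma soc_nonneg {g G : ℝ → ℝ} {L δ : ℝ} (hδ : 0 < δ)
    (hg0 : g 0 = 0) (hgnn : ∀ τ ∈ Ioo (-δ) δ, 0 ≤ g τ)
    (hg' : ∀ τ ∈ Ioo (-δ) δ, HasDerivAt g (G τ) τ)
    (hG' : HasDerivAt G L 0) : 0 ≤ L := by
  by_contra hL
  push_neg at hL
  have h0mem : (0:ℝ) ∈ Ioo (-δ) δ := ⟨by linarith, hδ⟩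
  have hG0 : G 0 = 0 := by
    have hmin : IsLocalMin g 0 := by
      filter_upwards [isOpen_Ioo.mem_nhds h0mem] with t ht
      rw [hg0]; exact hgnn t ht
    exact hmin.hasDerivAt_eq_zero (hg' 0 h0mem)
  have hslope := hasDerivAt_iff_tendsto_slope.1 hG'
  have hev : ∀ᶠ τ in 𝓝[>] (0:ℝ), G τ < 0 := by
    have h1 : ∀ᶠ τ in 𝓝[≠] (0:ℝ), slope G 0 τ < 0 := hslope.eventually_lt_const hL
    have h2 : ∀ᶠ τ in 𝓝[>] (0:ℝ), slope G 0 τ < 0 :=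
      h1.filter_mono (nhdsWithin_mono 0 (fun x hx => ne_of_gt hx))
    filter_upwards [h2, self_mem_nhdsWithin] with τ h hτ
    have : slope G 0 τ = G τ / τ := by rw [slope_def_field, hG0]; ring_nf
    rw [this] at h
    have hτ' : (0:ℝ) < τ := hτ
    have := (div_lt_iff₀ hτ').1 h
    linarith
  obtain ⟨u, hu, hsub⟩ := mem_nhdsGT_iff_exists_Ioo_subset.1 hev
  have hu0 : (0:ℝ) < u := hu
  set ε := min u δ / 2 with hε
  have hε0 : 0 < ε := by positivity
  have hεu : ε < u := by
    have := min_le_left u δ; simp only [hε]; linarith [min_le_left u δ, hu0, hδ]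
  have hεδ : ε < δ := by
    simp only [hε]; linarith [min_le_right u δ, hu0, hδ]
  have hIccsub : Icc (0:ℝ) ε ⊆ Ioo (-δ) δ := fun τ hτ => ⟨by linarith [hτ.1], by linarith [hτ.2]⟩
  have hanti : StrictAntiOn g (Icc (0:ℝ) ε) := by
    apply strictAntiOn_of_deriv_neg (convex_Icc 0 ε)
    · exact fun τ hτ => (hg' τ (hIccsub hτ)).continuousAt.continuousWithinAt
    · intro τ hτ
      rw [interior_Icc] at hτ
      rw [(hg' τ (hIccsub (Ioo_subset_Icc_self hτ))).deriv]
      exact hsub ⟨hτ.1, by linarith [hτ.2]⟩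
  have hlt : g ε < g 0 := hanti (left_mem_Icc.2 (le_of_lt hε0)) (right_mem_Icc.2 (le_of_lt hε0)) hε0
  have : 0 ≤ g ε := hgnn ε ⟨by linarith, hεδ⟩
  rw [hg0] at hlt; linarith

lemma convexOn_Icc_of_deriv2 {g G K : ℝ → ℝ}
    (hg : ∀ τ ∈ Icc (0:ℝ) 1, HasDerivAt g (G τ) τ)
    (hG : ∀ τ ∈ Icc (0:ℝ) 1, HasDerivAt G (K τ) τ)
    (hK : ∀ τ ∈ Icc (0:ℝ) 1, 0 ≤ K τ) : ConvexOn ℝ (Icc (0:ℝ) 1) g := by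
  have hder : ∀ τ ∈ Ioo (0:ℝ) 1, deriv g =ᶠ[𝓝 τ] G := by
    intro τ hτ
    filter_upwards [isOpen_Ioo.mem_nhds hτ] with t ht
    exact (hg t (Ioo_subset_Icc_self ht)).deriv
  apply convexOn_of_deriv2_nonneg (convex_Icc 0 1)
  · exact fun τ hτ => (hg τ hτ).continuousAt.continuousWithinAt
  · intro τ hτ
    rw [interior_Icc] at hτ
    exact ((hg τ (Ioo_subset_Icc_self hτ)).differentiableAt).differentiableWithinAt
  · intro τ hτ
    rw [interior_Icc] at hτ
    have hd : DifferentiableAt ℝ G τ := (hG τ (Ioo_subset_Icc_self hτ)).differentiableAt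
    exact (hd.congr_of_eventuallyEq (hder τ hτ)).differentiableWithinAt
  · intro τ hτ
    rw [interior_Icc] at hτ
    have h1 : deriv (deriv g) τ = deriv G τ := (hder τ hτ).deriv_eq
    have h2 : deriv G τ = K τ := (hG τ (Ioo_subset_Icc_self hτ)).deriv
    show 0 ≤ deriv^[2] g τ
    have h3 : deriv^[2] g τ = deriv (deriv g) τ := by
      simp [Function.iterate_succ_apply']
    rw [h3, h1, h2]
    exact hK τ (Ioo_subset_Icc_self hτ)

lemma convexOn_of_line_derivs {Cs : Set (E n)} (hC : Convex ℝ Cs) {f : E n → ℝ}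
    {gf kf : E n → E n → ℝ}
    (h1 : ∀ (y w : E n) (τ : ℝ), y + τ • w ∈ Cs →
        HasDerivAt (fun t : ℝ => f (y + t • w)) (gf (y + τ • w) w) τ)
    (h2 : ∀ (y w : E n) (τ : ℝ), y + τ • w ∈ Cs →
        HasDerivAt (fun t : ℝ => gf (y + t • w) w) (kf (y + τ • w) w) τ)
    (hk : ∀ p ∈ Cs, ∀ w, 0 ≤ kf p w) : ConvexOn ℝ Cs f := by
  refine ⟨hC, ?_⟩
  intro y hy z hz a b ha hb hab
  have hmem : ∀ τ ∈ Icc (0:ℝ) 1, y + τ • (z - y) ∈ Cs := fun τ hτ =>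
    hC.add_smul_sub_mem hy hz hτ
  have hcv := convexOn_Icc_of_deriv2
      (g := fun t => f (y + t • (z - y)))
      (G := fun t => gf (y + t • (z - y)) (z - y))
      (K := fun t => kf (y + t • (z - y)) (z - y))
      (fun τ hτ => h1 _ _ _ (hmem τ hτ)) (fun τ hτ => h2 _ _ _ (hmem τ hτ))
      (fun τ hτ => hk _ (hmem τ hτ) _)
  have hc2 := hcv.2 (left_mem_Icc.2 zero_le_one) (right_mem_Icc.2 zero_le_one) ha hb hab
  simp only [smul_eq_mul, mul_zero, mul_one, zero_add] at hc2
  have hpt : y + b • (z - y) = a • y + b • z := by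
    have : a = 1 - b := by linarith
    rw [this, smul_sub, sub_smul, one_smul]; abel
  rw [hpt] at hc2
  simpa [smul_eq_mul] using hc2

end Tools2

section Tools3
variable {n : ℕ}

lemma biconj_le {P : Set (E n)} {g : E n → ℝ} {y : E n} (hy : y ∈ P)
    {m : ℝ} (hm : ∀ z ∈ P, m ≤ g z) : biconj P g y ≤ g y := by
  apply csSup_le
  · exact ⟨(0 : E n →L[ℝ] ℝ) y + m, (0 : E n →L[ℝ] ℝ), m,
      fun z hz => by simpa using hm z hz, rfl⟩
  · rintro r ⟨a, c, hmin, rfl⟩; exact hmin y hy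

lemma le_biconj {P : Set (E n)} {g : E n → ℝ} {y : E n} (hy : y ∈ P)
    {w : E n} {c : ℝ} (hmin : ∀ z ∈ P, ⟪w, z⟫ + c ≤ g z) :
    ⟪w, y⟫ + c ≤ biconj P g y := by
  apply le_csSup
  · exact ⟨g y, by rintro r ⟨a, c', hmin', rfl⟩; exact hmin' y hy⟩
  · exact ⟨innerSL ℝ w, c, fun z hz => by simpa using hmin z hz, by simp⟩

lemma biconj_eq_of_touch {P : Set (E n)} {g : E n → ℝ} {y : E n} (hy : y ∈ P)
    {w : E n} {c : ℝ} (hmin : ∀ z ∈ P, ⟪w, z⟫ + c ≤ g z) (ht : ⟪w, y⟫ + c = g y) :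
    biconj P g y = g y := by
  refine le_antisymm ?_ (ht ▸ le_biconj hy hmin)
  apply csSup_le
  · exact ⟨⟪w, y⟫ + c, innerSL ℝ w, c, fun z hz => by simpa using hmin z hz, by simp⟩
  · rintro r ⟨a, c', hmin', rfl⟩; exact hmin' y hy

lemma continuous_uG {d : ℕ} (v : Fin d → E n) (lam : Fin d → ℝ) :
    Continuous (uG v lam) := by
  unfold uG
  apply continuous_finset_sum
  intro k _
  have hl : Continuous (lfun v lam k) := by
    unfold lfun; exact (continuous_id.inner continuous_const).sub continuous_const
  have h2 : (fun y => lfun v lam k y * Real.log (lfun v lam k y))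
      = (fun t : ℝ => -Real.negMulLog t) ∘ (lfun v lam k) := by
    funext y; simp [Real.negMulLog]
  rw [h2]
  exact (Real.continuous_negMulLog.neg).comp hl

lemma convex_Pset {d : ℕ} (v : Fin d → E n) (lam : Fin d → ℝ) : Convex ℝ (Pset v lam) := by
  have h0 : Pset v lam = ⋂ k, {y : E n | lam k ≤ ⟪v k, y⟫} := by
    ext y
    simp only [Pset, mem_iInter, mem_setOf_eq, lfun]
    constructor
    · intro h k; have := h k; rw [real_inner_comm]; linarith
    · intro h k; have := h k; rw [real_inner_comm] at this; linarith
  rw [h0]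
  refine convex_iInter fun k => ?_
  exact convex_halfSpace_ge
    ⟨fun a b => inner_add_right _ _ _, fun r a => real_inner_smul_right _ _ r⟩ (lam k)

end Tools3


section Tools4
variable {n : ℕ}

lemma touch_limit {P : Set (E n)} (hPc : IsCompact P)
    {g : E n → ℝ} (hg : ContinuousOn g P)
    {x : E n} {ρ : ℝ} (hρ : 0 < ρ) (hball : Metric.closedBall x (2*ρ) ⊆ P)
    (xk : ℕ → E n) (hxk : ∀ k, xk k ∈ Metric.closedBall x ρ)
    (hlim : Tendsto xk atTop (𝓝 x))
    (heq : ∀ k, g (xk k) = biconj P g (xk k)) :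
    ∃ w c, (∀ z ∈ P, ⟪w, z⟫ + c ≤ g z) ∧ ⟪w, x⟫ + c = g x := by
  have hxP : ∀ k, xk k ∈ P := fun k =>
    hball (Metric.closedBall_subset_closedBall (by linarith) (hxk k))
  have hxmem : x ∈ P := hball (by simp [Metric.mem_closedBall]; positivity)
  obtain ⟨zM, hzM, hM⟩ := hPc.exists_isMaxOn ⟨x, hxmem⟩ hg
  obtain ⟨zm, hzm, hm⟩ := hPc.exists_isMinOn ⟨x, hxmem⟩ hg
  set M := g zM with hMdef
  set m := g zm with hmdef
  have hMle : ∀ z ∈ P, g z ≤ M := fun z hz => hM hz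
  have hmle : ∀ z ∈ P, m ≤ g z := fun z hz => hm hz
  have hmM : m ≤ M := hmle zM hzM
  -- for each k get an approximate touching affine minorant
  have hsel : ∀ k : ℕ, ∃ (w : E n) (c : ℝ), (∀ z ∈ P, ⟪w, z⟫ + c ≤ g z) ∧
      g (xk k) - 1/(k+1) < ⟪w, xk k⟫ + c ∧ ⟪w, xk k⟫ + c ≤ g (xk k) := by
    intro k
    have hne : {r : ℝ | ∃ (a : E n →L[ℝ] ℝ) (c : ℝ),
        (∀ z ∈ P, a z + c ≤ g z) ∧ r = a (xk k) + c}.Nonempty :=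
      ⟨(0 : E n →L[ℝ] ℝ) (xk k) + m, (0 : E n →L[ℝ] ℝ), m,
        fun z hz => by simpa using hmle z hz, rfl⟩
    have hlt : g (xk k) - 1/(k+1) < biconj P g (xk k) := by
      rw [← heq k]
      have : (0:ℝ) < 1/(k+1) := by positivity
      linarith
    obtain ⟨r, ⟨a, c, hmin, rfl⟩, hgt⟩ := exists_lt_of_lt_csSup hne hlt
    refine ⟨(InnerProductSpace.toDual ℝ (E n)).symm a, c, ?_, ?_, ?_⟩
    · intro z hz; rw [InnerProductSpace.toDual_symm_apply]; exact hmin z hz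
    · rw [InnerProductSpace.toDual_symm_apply]; exact hgt
    · rw [InnerProductSpace.toDual_symm_apply]; exact hmin (xk k) (hxP k)
  choose w c hminor happrox hupper using hsel
  -- uniform bounds
  set C₁ : ℝ := (M - m + 1) / ρ with hC₁def
  have hC₁pos : 0 < C₁ := div_pos (by linarith) hρ
  have hwb : ∀ k, ‖w k‖ ≤ C₁ := by
    intro k
    rcases eq_or_ne (w k) 0 with h0 | h0
    · rw [h0]; simp; positivity
    · have he : ∀ e : E n, ‖e‖ ≤ 1 → ⟪w k, e⟫ ≤ (M - m + 1) / ρ := by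
        intro e he
        have hmem : xk k + ρ • e ∈ P := by
          apply hball
          rw [Metric.mem_closedBall]
          calc dist (xk k + ρ • e) x ≤ dist (xk k + ρ • e) (xk k) + dist (xk k) x :=
                dist_triangle _ _ _
            _ ≤ ρ * 1 + ρ := by
                refine add_le_add ?_ (hxk k)
                rw [dist_eq_norm]
                simp only [add_sub_cancel_left, norm_smul, Real.norm_eq_abs,
                  abs_of_pos hρ]
                exact mul_le_mul_of_nonneg_left he (le_of_lt hρ)
            _ = 2 * ρ := by ring
        have h1 := hminor k _ hmem
        have h2 := happrox k
        have h3 : g (xk k) - 1/(k+1) ≥ m - 1 := by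
          have := hmle (xk k) (hxP k)
          have h4 : 1/((k:ℝ)+1) ≤ 1 := by
            rw [div_le_one (by positivity)]; norm_num
          linarith
        have h5 := hMle _ hmem
        rw [inner_add_right, real_inner_smul_right] at h1
        have h6 : ρ * ⟪w k, e⟫ ≤ M - m + 1 := by linarith
        rw [le_div_iff₀ hρ]
        linarith
      have := he (‖w k‖⁻¹ • w k) (by
        rw [norm_smul, norm_inv, norm_norm]
        rw [inv_mul_le_iff₀ (norm_pos_iff.2 h0)]; simp)
      rw [real_inner_smul_right, real_inner_self_eq_norm_sq] at this
      rw [hC₁def]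
      calc ‖w k‖ = ‖w k‖⁻¹ * ‖w k‖^2 := by
            rw [sq, ← mul_assoc, inv_mul_cancel₀ (norm_ne_zero_iff.2 h0), one_mul]
        _ ≤ (M - m + 1)/ρ := this
  have hxkb : ∀ k, ‖xk k‖ ≤ ‖x‖ + ρ := by
    intro k
    have := hxk k
    rw [Metric.mem_closedBall, dist_eq_norm] at this
    calc ‖xk k‖ = ‖(xk k - x) + x‖ := by rw [sub_add_cancel]
      _ ≤ ‖xk k - x‖ + ‖x‖ := norm_add_le _ _
      _ ≤ ρ + ‖x‖ := by linarith
      _ = ‖x‖ + ρ := by ring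
  set C₂ : ℝ := C₁ * (‖x‖ + ρ) + (|m| + |M| + 1) with hC₂def
  have hcb : ∀ k, |c k| ≤ C₂ := by
    intro k
    have h1 : |⟪w k, xk k⟫| ≤ C₁ * (‖x‖ + ρ) := by
      calc |⟪w k, xk k⟫| ≤ ‖w k‖ * ‖xk k‖ := abs_real_inner_le_norm _ _
        _ ≤ C₁ * (‖x‖ + ρ) := by
            apply mul_le_mul (hwb k) (hxkb k) (norm_nonneg _)
            positivity
    have h2 := happrox k
    have h3 := hupper k
    have h4 : m ≤ g (xk k) := hmle _ (hxP k)
    have h5 : g (xk k) ≤ M := hMle _ (hxP k)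
    have h6 : 1/((k:ℝ)+1) ≤ 1 := by
      rw [div_le_one (by positivity)]; norm_num
    have h7 : (0:ℝ) < 1/((k:ℝ)+1) := by positivity
    rw [abs_le]
    obtain ⟨h1a, h1b⟩ := abs_le.1 h1
    constructor
    · have h9 : c k > m - 1 - ⟪w k, xk k⟫ := by linarith
      rw [hC₂def]
      have := neg_abs_le m
      have := abs_nonneg M
      linarith
    · have h9 : c k ≤ M - ⟪w k, xk k⟫ := by linarith
      rw [hC₂def]
      have := le_abs_self M
      have := abs_nonneg m
      linarith
  -- compactness extraction in E n × ℝ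
  set p : ℕ → E n × ℝ := fun k => (w k, c k) with hpdef
  have hpmem : ∀ k, p k ∈ Metric.closedBall (0 : E n × ℝ) (C₁ + C₂) := by
    intro k
    rw [Metric.mem_closedBall, dist_zero_right, Prod.norm_def]
    apply max_le
    · have := hwb k
      have h0 : (0:ℝ) ≤ C₂ := le_trans (abs_nonneg _) (hcb 0)
      simpa using by linarith
    · have := hcb k
      have : ‖c k‖ ≤ C₂ := by rwa [Real.norm_eq_abs]
      linarith [hC₁pos]
  obtain ⟨⟨w₀, c₀⟩, _, φ, hφ, hconv⟩ :=
    (isCompact_closedBall (0 : E n × ℝ) (C₁ + C₂)).tendsto_subseq hpmem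
  have hwlim : Tendsto (fun j => w (φ j)) atTop (𝓝 w₀) :=
    (continuous_fst.tendsto _).comp hconv
  have hclim : Tendsto (fun j => c (φ j)) atTop (𝓝 c₀) :=
    (continuous_snd.tendsto _).comp hconv
  have hxφ : Tendsto (fun j => xk (φ j)) atTop (𝓝 x) := hlim.comp hφ.tendsto_atTop
  refine ⟨w₀, c₀, ?_, ?_⟩
  · intro z hz
    have hv : Tendsto (fun j => ⟪w (φ j), z⟫ + c (φ j)) atTop (𝓝 (⟪w₀, z⟫ + c₀)) :=
      ((Continuous.inner continuous_id continuous_const).tendsto w₀).comp hwlim |>.add hclim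
    exact le_of_tendsto hv (Eventually.of_forall fun j => hminor (φ j) z hz)
  · -- touching in the limit
    have hv : Tendsto (fun j => ⟪w (φ j), xk (φ j)⟫ + c (φ j))
        atTop (𝓝 (⟪w₀, x⟫ + c₀)) := by
      have h1 : Tendsto (fun j => (w (φ j), xk (φ j))) atTop (𝓝 (w₀, x)) :=
        hwlim.prodMk_nhds hxφ
      exact ((continuous_inner.tendsto _).comp h1).add hclim
    have hgx : Tendsto (fun j => g (xk (φ j))) atTop (𝓝 (g x)) := by
      have h2 : Tendsto (fun j => xk (φ j)) atTop (𝓝[P] x) :=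
        tendsto_nhdsWithin_of_tendsto_nhds_of_eventually_within _ hxφ
          (Eventually.of_forall fun j => hxP (φ j))
      exact (hg x hxmem).tendsto.comp h2
    have hone : Tendsto (fun j => g (xk (φ j)) - 1/((φ j : ℝ)+1)) atTop (𝓝 (g x)) := by
      have h3 : Tendsto (fun j : ℕ => 1/((φ j : ℝ)+1)) atTop (𝓝 0) := by
        apply squeeze_zero (fun j => by positivity)
          (fun j => ?_) tendsto_one_div_add_atTop_nhds_zero_nat
        apply div_le_div_of_nonneg_left (by norm_num) (by positivity)
        have : (j:ℝ) ≤ (φ j : ℝ) := by exact_mod_cast hφ.le_apply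
        linarith
      simpa using hgx.sub h3
    have hsq : Tendsto (fun j => ⟪w (φ j), xk (φ j)⟫ + c (φ j)) atTop (𝓝 (g x)) :=
      tendsto_of_tendsto_of_tendsto_of_le_of_le hone hgx
        (fun j => le_of_lt (happrox (φ j))) (fun j => hupper (φ j))
    exact tendsto_nhds_unique hv hsq

end Tools4


section Tools5
variable {n : ℕ}

lemma support_ineq {P : Set (E n)} {u₀ : E n → ℝ}
    (hconv : ConvexOn ℝ P u₀)
    {x : E n} (hdiff : DifferentiableAt ℝ u₀ x) (hx : x ∈ P) {z : E n} (hz : z ∈ P) :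
    u₀ x + ⟪gradient u₀ x, z - x⟫ ≤ u₀ z := by
  have hd : HasDerivAt (fun t : ℝ => u₀ (x + t • (z - x)))
      ⟪gradient u₀ (x + (0:ℝ) • (z - x)), z - x⟫ 0 :=
    hasDerivAt_line (by simpa using hdiff)
  simp only [zero_smul, add_zero] at hd
  exact conv_grad_ineq hconv hx hz hd

lemma strict_support {P : Set (E n)} (hPcv : Convex ℝ P) {u₀ : E n → ℝ}
    (hu₀ : ContDiffOn ℝ (⊤ : ℕ∞) u₀ (interior P)) (hconv : ConvexOn ℝ P u₀)
    (hpos : ∀ y ∈ interior P, ∀ w : E n, w ≠ 0 → 0 < ⟪(fderiv ℝ (gradient u₀) y) w, w⟫)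
    {x : E n} (hx : x ∈ interior P) {z : E n} (hz : z ∈ P) (hne : z ≠ x) :
    u₀ x + ⟪gradient u₀ x, z - x⟫ < u₀ z := by
  set gc := gradient u₀ x with hgc
  have hxP : x ∈ P := interior_subset hx
  have hdiffx : DifferentiableAt ℝ u₀ x := diffAt_of_contDiffOn isOpen_interior hu₀ hx
  have hle := support_ineq hconv hdiffx hxP hz
  rcases lt_or_eq_of_le hle with h | hEq
  · exact h
  exfalso
  set w : E n := z - x with hw
  have hw0 : w ≠ 0 := sub_ne_zero.2 hne
  have hcombo : ∀ τ : ℝ, (1-τ) • x + τ • z = x + τ • w := by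
    intro τ; rw [hw, smul_sub, sub_smul, one_smul]; abel
  have hmemI : ∀ τ : ℝ, τ ∈ Ioo (0:ℝ) 1 → x + τ • w ∈ interior P := by
    intro τ hτ
    have h2 := hPcv.combo_interior_closure_mem_interior hx (subset_closure hz)
      (by linarith [hτ.2] : 0 < 1 - τ) (le_of_lt hτ.1) (by ring)
    rwa [hcombo] at h2
  have hmemP : ∀ τ : ℝ, τ ∈ Icc (0:ℝ) 1 → x + τ • w ∈ P :=
    fun τ hτ => hPcv.add_smul_sub_mem hxP hz hτ
  have hinner : ∀ τ : ℝ, ⟪gc, (x + τ • w) - x⟫ = τ * ⟪gc, w⟫ := by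
    intro τ; rw [add_sub_cancel_left, real_inner_smul_right]
  set gfun : ℝ → ℝ := fun t => (u₀ (x + t • w) - u₀ x) - t * ⟪gc, w⟫ with hgfun
  have hgzero : ∀ τ ∈ Ioo (0:ℝ) 1, gfun τ = 0 := by
    intro τ hτ
    have hτ' : τ ∈ Icc (0:ℝ) 1 := Ioo_subset_Icc_self hτ
    have hlow : u₀ x + ⟪gc, (x + τ • w) - x⟫ ≤ u₀ (x + τ • w) :=
      support_ineq hconv hdiffx hxP (hmemP τ hτ')
    rw [hinner] at hlow
    have hup : u₀ (x + τ • w) ≤ (1-τ) * u₀ x + τ * u₀ z := by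
      have h2 := hconv.2 hxP hz (by linarith [hτ.2] : (0:ℝ) ≤ 1-τ) (le_of_lt hτ.1)
        (by ring : (1-τ) + τ = 1)
      rw [hcombo] at h2
      simpa [smul_eq_mul] using h2
    have hEq2 : u₀ z = u₀ x + ⟪gc, w⟫ := by rw [hw]; linarith [hEq]
    rw [hEq2] at hup
    have hr : (1-τ) * u₀ x + τ * (u₀ x + ⟪gc, w⟫) = u₀ x + τ * ⟪gc, w⟫ := by ring
    rw [hr] at hup
    simp only [hgfun]
    linarith
  set Gfun : ℝ → ℝ := fun t => ⟪gradient u₀ (x + t • w), w⟫ - ⟪gc, w⟫ with hGfun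
  have hgderiv : ∀ τ ∈ Ioo (0:ℝ) 1, HasDerivAt gfun (Gfun τ) τ := by
    intro τ hτ
    have hdt : DifferentiableAt ℝ u₀ (x + τ • w) :=
      diffAt_of_contDiffOn isOpen_interior hu₀ (hmemI τ hτ)
    exact ((hasDerivAt_line hdt).sub_const (u₀ x)).sub (hasDerivAt_mul_const ⟪gc, w⟫)
  have hGzero : ∀ τ ∈ Ioo (0:ℝ) 1, Gfun τ = 0 := by
    intro τ hτ
    apply deriv_zero_of_eventually_zero (hgderiv τ hτ)
    filter_upwards [isOpen_Ioo.mem_nhds hτ] with t ht using hgzero t ht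
  set m : E n := x + (2⁻¹ : ℝ) • w with hm
  have hmI : m ∈ interior P := hmemI 2⁻¹ (by norm_num)
  have hgd : DifferentiableAt ℝ (gradient u₀) m :=
    gradDiffAt_of_contDiffOn isOpen_interior hu₀ hmI
  have hGderiv : HasDerivAt Gfun ⟪(fderiv ℝ (gradient u₀) m) w, w⟫ (2⁻¹ : ℝ) :=
    (hasDerivAt_line_grad (by rwa [← hm])).sub_const ⟪gc, w⟫
  have hL0 : ⟪(fderiv ℝ (gradient u₀) m) w, w⟫ = 0 := by
    apply deriv_zero_of_eventually_zero hGderiv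
    filter_upwards [isOpen_Ioo.mem_nhds (by norm_num : (2⁻¹:ℝ) ∈ Ioo (0:ℝ) 1)]
      with t ht using hGzero t ht
  exact absurd hL0 (ne_of_gt (hpos m hmI w hw0))

end Tools5


section Tools6
variable {n : ℕ}

lemma u0_env {P : Set (E n)} (hPcv : Convex ℝ P) {u₀ : E n → ℝ}
    (hu₀ : ContDiffOn ℝ (⊤ : ℕ∞) u₀ (interior P)) (hconv : ConvexOn ℝ P u₀)
    (hu₀c : ContinuousOn u₀ P)
    {x₀ : E n} (hx₀ : x₀ ∈ interior P) {y : E n} (hy : y ∈ P) {ε : ℝ} (hε : 0 < ε) :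
    ∃ w c, (∀ z ∈ P, ⟪w, z⟫ + c ≤ u₀ z) ∧ u₀ y - ε < ⟪w, y⟫ + c := by
  set yt : ℝ → E n := fun t => y + t • (x₀ - y) with hyt
  have hytI : ∀ t : ℝ, t ∈ Ioo (0:ℝ) 1 → yt t ∈ interior P := by
    intro t ht
    have h2 := hPcv.combo_interior_closure_mem_interior hx₀ (subset_closure hy)
      ht.1 (by linarith [ht.2] : (0:ℝ) ≤ 1 - t) (by ring)
    have hcombo : t • x₀ + (1-t) • y = yt t := by
      rw [hyt]; simp only [smul_sub, sub_smul, one_smul]; abel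
    rwa [hcombo] at h2
  -- limit of the affine values
  set φ : ℝ → ℝ := fun t => u₀ (yt t) - (t/(1-t)) * (u₀ x₀ - u₀ (yt t)) with hφ
  have hytc : Tendsto yt (𝓝[>] (0:ℝ)) (𝓝 y) := by
    have hc : Continuous yt := continuous_const.add (continuous_id.smul continuous_const)
    have := (hc.tendsto 0).mono_left (nhdsWithin_le_nhds (s := Ioi (0:ℝ)))
    simpa [hyt] using this
  have hmem : ∀ᶠ t in 𝓝[>] (0:ℝ), t ∈ Ioo (0:ℝ) 1 :=
    Ioo_mem_nhdsGT_of_mem (by constructor <;> norm_num)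
  have huyt : Tendsto (fun t => u₀ (yt t)) (𝓝[>] (0:ℝ)) (𝓝 (u₀ y)) := by
    apply (hu₀c y hy).tendsto.comp
    apply tendsto_nhdsWithin_of_tendsto_nhds_of_eventually_within _ hytc
    filter_upwards [hmem] with t ht using interior_subset (hytI t ht)
  have hrat : Tendsto (fun t : ℝ => t/(1-t)) (𝓝[>] (0:ℝ)) (𝓝 0) := by
    have h1 : Tendsto (fun t : ℝ => t/(1-t)) (𝓝 (0:ℝ)) (𝓝 (0/(1-0))) :=
      tendsto_id.div (tendsto_const_nhds.sub tendsto_id) (by norm_num)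
    simpa using h1.mono_left nhdsWithin_le_nhds
  have hφlim : Tendsto φ (𝓝[>] (0:ℝ)) (𝓝 (u₀ y)) := by
    have h2 : Tendsto (fun t => (t/(1-t)) * (u₀ x₀ - u₀ (yt t))) (𝓝[>] (0:ℝ))
        (𝓝 (0 * (u₀ x₀ - u₀ y))) := hrat.mul (tendsto_const_nhds.sub huyt)
    simpa [hφ] using huyt.sub h2
  have hev : ∀ᶠ t in 𝓝[>] (0:ℝ), u₀ y - ε < φ t :=
    hφlim.eventually_const_lt (by linarith)
  obtain ⟨t, hφt, ht01⟩ := (hev.and hmem).exists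
  set p := yt t with hp
  have hpI : p ∈ interior P := hytI t ht01
  have hdiffp : DifferentiableAt ℝ u₀ p := diffAt_of_contDiffOn isOpen_interior hu₀ hpI
  set w := gradient u₀ p with hwdef
  refine ⟨w, u₀ p - ⟪w, p⟫, ?_, ?_⟩
  · intro z hz
    have := support_ineq hconv hdiffp (interior_subset hpI) hz
    rw [inner_sub_right] at this
    linarith
  · -- value at y
    have hsupp := support_ineq hconv hdiffp (interior_subset hpI) (interior_subset hx₀)
    have hx0p : x₀ - p = (1-t) • (x₀ - y) := by
      rw [hp, hyt]; module
    have hyp : y - p = -(t • (x₀ - y)) := by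
      rw [hp, hyt]; module
    rw [hx0p, real_inner_smul_right] at hsupp
    have h1t : (0:ℝ) < 1 - t := by linarith [ht01.2]
    have hbound : ⟪w, x₀ - y⟫ ≤ (u₀ x₀ - u₀ p)/(1-t) := by
      rw [le_div_iff₀ h1t]; nlinarith [hsupp]
    have hval : ⟪w, y⟫ + (u₀ p - ⟪w, p⟫) = u₀ p - t * ⟪w, x₀ - y⟫ := by
      have : ⟪w, y⟫ - ⟪w, p⟫ = - (t * ⟪w, x₀ - y⟫) := by
        rw [← inner_sub_right, hyp, inner_neg_right, real_inner_smul_right]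
      linarith
    rw [hval]
    have h2 : t * ⟪w, x₀ - y⟫ ≤ t * ((u₀ x₀ - u₀ p)/(1-t)) :=
      mul_le_mul_of_nonneg_left hbound (le_of_lt ht01.1)
    have h3 : u₀ y - ε < φ t := hφt
    rw [hφ] at h3
    simp only [← hp] at h3
    have : t * ((u₀ x₀ - u₀ p)/(1-t)) = (t/(1-t)) * (u₀ x₀ - u₀ p) := by ring
    linarith [h2, this ▸ h2]
  
end Tools6


section Tools7
variable {n : ℕ}

set_option maxHeartbeats 1000000 in
lemma key_lemma (hn : 1 ≤ n) {P U : Set (E n)} (hPcv : Convex ℝ P) (hPc : IsCompact P)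
    (hU : IsOpen U) (hPU : P ⊆ U)
    {u₀ udot : E n → ℝ}
    (hu₀ : ContDiffOn ℝ (⊤:ℕ∞) u₀ (interior P)) (hudot : ContDiffOn ℝ (⊤:ℕ∞) udot U)
    (hconv : ConvexOn ℝ P u₀)
    (hpos : ∀ y ∈ interior P, ∀ w : E n, w ≠ 0 → 0 < ⟪(fderiv ℝ (gradient u₀) y) w, w⟫)
    (hu₀c : ContinuousOn u₀ P) (hudc : ContinuousOn udot P)
    {s₁ s₂ : ℝ} (hs₁ : 0 < s₁) (hs : s₁ < s₂)
    {x : E n} (hxI : x ∈ interior P)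
    {w₂ : E n} {c₂ : ℝ}
    (hmin2 : ∀ z ∈ P, ⟪w₂, z⟫ + c₂ ≤ u₀ z + s₂ * udot z)
    (htouch : ⟪w₂, x⟫ + c₂ = u₀ x + s₂ * udot x) :
    ∃ r > 0, Metric.ball x r ⊆ P ∧ ∀ y ∈ Metric.ball x r,
      ∃ w c, (∀ z ∈ P, ⟪w, z⟫ + c ≤ u₀ z + s₁ * udot z) ∧
        ⟪w, y⟫ + c = u₀ y + s₁ * udot y := by
  have hs₂ : 0 < s₂ := lt_trans hs₁ hs
  set t : ℝ := s₁ / s₂ with htdef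
  have ht0 : 0 < t := div_pos hs₁ hs₂
  have ht1 : t < 1 := (div_lt_one hs₂).2 hs
  have hts : t * s₂ = s₁ := div_mul_cancel₀ s₁ (ne_of_gt hs₂)
  set S : Set (E n) := interior P ∩ U with hSdef
  have hS : IsOpen S := isOpen_interior.inter hU
  have hxS : x ∈ S := ⟨hxI, hPU (interior_subset hxI)⟩
  have hSP : S ⊆ P := fun p hp => interior_subset hp.1
  have hSI : S ⊆ interior P := fun p hp => hp.1
  have hxP : x ∈ P := hSP hxS
  set gc : E n := gradient u₀ x with hgc
  have hdiffx : DifferentiableAt ℝ u₀ x := diffAt_of_contDiffOn isOpen_interior hu₀ hxI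
  have csup : ∀ z ∈ P, u₀ x + ⟪gc, z - x⟫ ≤ u₀ z :=
    fun z hz => support_ineq hconv hdiffx hxP hz
  have cstrict : ∀ z ∈ P, z ≠ x → u₀ x + ⟪gc, z - x⟫ < u₀ z :=
    fun z hz hne => strict_support hPcv hu₀ hconv hpos hxI hz hne
  set h : E n → ℝ := fun z =>
    u₀ z + s₁ * udot z - (t * (⟪w₂, z⟫ + c₂) + (1 - t) * (u₀ x + ⟪gc, z - x⟫)) with hdef
  have hid : ∀ z, u₀ z + s₁ * udot z
      = t * (u₀ z + s₂ * udot z) + (1 - t) * (u₀ z) := by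
    intro z; rw [← hts]; ring
  have hdecomp : ∀ z, h z = t * ((u₀ z + s₂ * udot z) - (⟪w₂, z⟫ + c₂))
      + (1 - t) * (u₀ z - (u₀ x + ⟪gc, z - x⟫)) := by
    intro z; simp only [hdef]; rw [hid z]; ring
  have hnn : ∀ z ∈ P, 0 ≤ h z := by
    intro z hz
    rw [hdecomp z]
    have h1 := mul_nonneg (le_of_lt ht0) (sub_nonneg.2 (hmin2 z hz))
    have h2 := mul_nonneg (by linarith : (0:ℝ) ≤ 1 - t) (sub_nonneg.2 (csup z hz))
    linarith
  have hgap : ∀ z ∈ P, (1 - t) * (u₀ z - (u₀ x + ⟪gc, z - x⟫)) ≤ h z := by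
    intro z hz
    rw [hdecomp z]
    have h1 := mul_nonneg (le_of_lt ht0) (sub_nonneg.2 (hmin2 z hz))
    linarith
  have hx0 : h x = 0 := by
    simp only [hdef, sub_self, inner_zero_right]
    rw [htouch, ← hts]; ring
  -- a closed ball inside S
  obtain ⟨ρ₁, hρ₁, hball₁⟩ : ∃ ρ₁ > 0, Metric.closedBall x ρ₁ ⊆ S := by
    rcases Metric.nhds_basis_closedBall.mem_iff.1 (hS.mem_nhds hxS) with ⟨ρ₁, hρ₁, hsub⟩
    exact ⟨ρ₁, hρ₁, hsub⟩
  -- quadratic forms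
  set Hq : E n → E n → ℝ := fun p w =>
    ⟪(fderiv ℝ (gradient u₀) p) w, w⟫ + s₁ * ⟪(fderiv ℝ (gradient udot) p) w, w⟫ with hHq
  -- second order condition at x for u₀ + s₂ udot - affine
  have hsoc : ∀ w : E n,
      0 ≤ ⟪(fderiv ℝ (gradient u₀) x) w, w⟫ + s₂ * ⟪(fderiv ℝ (gradient udot) x) w, w⟫ := by
    intro w
    set δ : ℝ := ρ₁ / (‖w‖ + 1) with hδdef
    have hδ : 0 < δ := div_pos hρ₁ (by positivity)
    have hmemS : ∀ τ : ℝ, τ ∈ Ioo (-δ) δ → x + τ • w ∈ S := by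
      intro τ hτ
      apply hball₁
      rw [Metric.mem_closedBall, dist_eq_norm, add_sub_cancel_left, norm_smul,
        Real.norm_eq_abs]
      have habs : |τ| ≤ δ := le_of_lt (abs_lt.2 ⟨hτ.1, hτ.2⟩)
      calc |τ| * ‖w‖ ≤ δ * ‖w‖ := mul_le_mul_of_nonneg_right habs (norm_nonneg w)
        _ ≤ δ * (‖w‖ + 1) := by nlinarith [hδ]
        _ = ρ₁ := by rw [hδdef]; field_simp
    set g : ℝ → ℝ := fun τ => (u₀ (x + τ • w) + s₂ * udot (x + τ • w))
      - (⟪w₂, x⟫ + τ * ⟪w₂, w⟫ + c₂) with hgdef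
    set G : ℝ → ℝ := fun τ => ⟪gradient u₀ (x + τ • w), w⟫
      + s₂ * ⟪gradient udot (x + τ • w), w⟫ - ⟪w₂, w⟫ with hGdef
    have hinner2 : ∀ τ : ℝ, ⟪w₂, x + τ • w⟫ = ⟪w₂, x⟫ + τ * ⟪w₂, w⟫ := by
      intro τ; rw [inner_add_right, real_inner_smul_right]
    have hg0 : g 0 = 0 := by
      simp only [hgdef, zero_smul, add_zero, zero_mul]
      linarith [htouch]
    have hgnn : ∀ τ ∈ Ioo (-δ) δ, 0 ≤ g τ := by
      intro τ hτ
      have := hmin2 _ (hSP (hmemS τ hτ))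
      rw [hinner2 τ] at this
      simp only [hgdef]; linarith
    have hg' : ∀ τ ∈ Ioo (-δ) δ, HasDerivAt g (G τ) τ := by
      intro τ hτ
      have hd1 : DifferentiableAt ℝ u₀ (x + τ • w) :=
        diffAt_of_contDiffOn isOpen_interior hu₀ (hSI (hmemS τ hτ))
      have hd2 : DifferentiableAt ℝ udot (x + τ • w) :=
        diffAt_of_contDiffOn hU hudot (hmemS τ hτ).2
      exact ((hasDerivAt_line hd1).add ((hasDerivAt_line hd2).const_mul s₂)).sub
        (((hasDerivAt_mul_const ⟪w₂, w⟫).const_add ⟪w₂, x⟫).add_const c₂)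
    have hG' : HasDerivAt G (⟪(fderiv ℝ (gradient u₀) x) w, w⟫
        + s₂ * ⟪(fderiv ℝ (gradient udot) x) w, w⟫) 0 := by
      have hgd1 : DifferentiableAt ℝ (gradient u₀) (x + (0:ℝ) • w) := by
        simpa using gradDiffAt_of_contDiffOn isOpen_interior hu₀ (hSI hxS)
      have hgd2 : DifferentiableAt ℝ (gradient udot) (x + (0:ℝ) • w) := by
        simpa using gradDiffAt_of_contDiffOn hU hudot hxS.2
      have := ((hasDerivAt_line_grad hgd1).add
        ((hasDerivAt_line_grad hgd2).const_mul s₂)).sub_const ⟪w₂, w⟫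
      simpa [hGdef] using this
    exact soc_nonneg hδ hg0 hgnn hg' hG'
  -- smallest eigenvalue at x
  have hsph : (Metric.sphere (0 : E n) 1).Nonempty := by
    refine ⟨EuclideanSpace.single ⟨0, hn⟩ 1, ?_⟩
    simp [EuclideanSpace.norm_single]
  set A := fderiv ℝ (gradient u₀) x with hA
  have hQc : Continuous fun w : E n => ⟪A w, w⟫ := A.continuous.inner continuous_id
  obtain ⟨e₀, he₀mem, he₀min⟩ :=
    (isCompact_sphere (0 : E n) 1).exists_isMinOn hsph hQc.continuousOn
  have he₀norm : ‖e₀‖ = 1 := by simpa using he₀mem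
  set ε₀ : ℝ := ⟪A e₀, e₀⟫ with hε₀
  have hε₀pos : 0 < ε₀ :=
    hpos x hxI e₀ (by intro h0; rw [h0] at he₀norm; simp at he₀norm)
  have hquad : ∀ w : E n, ε₀ * ‖w‖^2 ≤ ⟪A w, w⟫ := by
    intro w
    rcases eq_or_ne w 0 with h0 | h0
    · simp [h0]
    · set e : E n := ‖w‖⁻¹ • w with he
      have hwpos : (0:ℝ) < ‖w‖ := norm_pos_iff.2 h0
      have hemem : e ∈ Metric.sphere (0 : E n) 1 := by
        simp [he, norm_smul, abs_of_pos (inv_pos.2 hwpos), inv_mul_cancel₀ (ne_of_gt hwpos)]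
      have hmin : ε₀ ≤ ⟪A e, e⟫ := he₀min hemem
      have h1 : ⟪A e, e⟫ = ‖w‖⁻¹ * (‖w‖⁻¹ * ⟪A w, w⟫) := by
        rw [he, _root_.map_smul, real_inner_smul_left, real_inner_smul_right]
      have h2 : ⟪A w, w⟫ = ‖w‖^2 * ⟪A e, e⟫ := by
        rw [h1, sq]
        field_simp
      rw [h2]
      have := mul_le_mul_of_nonneg_left hmin (sq_nonneg ‖w‖)
      linarith
  -- positivity of the s₁-Hessian quadratic form at x
  have hQ1x : ∀ w : E n, (1 - t) * ε₀ * ‖w‖^2 ≤ Hq x w := by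
    intro w
    have hErw : Hq x w = t * (⟪A w, w⟫ + s₂ * ⟪(fderiv ℝ (gradient udot) x) w, w⟫)
        + (1 - t) * ⟪A w, w⟫ := by
      simp only [hHq, hA]; rw [← hts]; ring
    have h1 := mul_nonneg (le_of_lt ht0) (hsoc w)
    have h2 := mul_le_mul_of_nonneg_left (hquad w) (by linarith : (0:ℝ) ≤ 1 - t)
    rw [hErw]
    nlinarith
  -- the Hessian operator map and its continuity
  set Hmap : E n → (E n →L[ℝ] E n) := fun p =>
    fderiv ℝ (gradient u₀) p + s₁ • fderiv ℝ (gradient udot) p with hHmap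
  have hHqHmap : ∀ p w, Hq p w = ⟪(Hmap p) w, w⟫ := by
    intro p w
    simp only [hHq, hHmap, ContinuousLinearMap.add_apply, ContinuousLinearMap.coe_smul',
      Pi.smul_apply, inner_add_left, real_inner_smul_left]
  have hHcont : ContinuousOn Hmap S := by
    apply ContinuousOn.add
    · exact (hess_continuousOn isOpen_interior hu₀).mono (inter_subset_left)
    · exact ((hess_continuousOn hU hudot).mono inter_subset_right).const_smul s₁
  set ε₁ : ℝ := (1 - t) * ε₀ / 2 with hε₁
  have hε₁pos : 0 < ε₁ := by
    apply div_pos (mul_pos (by linarith) hε₀pos) (by norm_num)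
  obtain ⟨ρ₂, hρ₂pos, hρ₂le, hρ₂H⟩ : ∃ ρ₂ > 0, ρ₂ ≤ ρ₁ ∧
      ∀ y ∈ Metric.closedBall x ρ₂, ‖Hmap y - Hmap x‖ ≤ ε₁ := by
    have hca : ContinuousAt Hmap x := hHcont.continuousAt (hS.mem_nhds hxS)
    rw [Metric.continuousAt_iff] at hca
    obtain ⟨δ, hδpos, hδ⟩ := hca ε₁ hε₁pos
    refine ⟨min (δ/2) ρ₁, lt_min (by linarith) hρ₁, min_le_right _ _, ?_⟩
    intro y hy
    rw [Metric.mem_closedBall] at hy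
    have : dist y x < δ := lt_of_le_of_lt (le_trans hy (min_le_left _ _)) (by linarith)
    have := hδ this
    rw [dist_eq_norm] at this
    exact le_of_lt this
  have hcbS : Metric.closedBall x ρ₂ ⊆ S :=
    subset_trans (Metric.closedBall_subset_closedBall hρ₂le) hball₁
  have hHpsd : ∀ y ∈ Metric.closedBall x ρ₂, ∀ w : E n, 0 ≤ Hq y w := by
    intro y hy w
    have hsplit : Hq y w = Hq x w - ⟪((Hmap x) - (Hmap y)) w, w⟫ := by
      rw [hHqHmap, hHqHmap, ContinuousLinearMap.sub_apply, inner_sub_left]; ring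
    have hbnd : |⟪((Hmap x) - (Hmap y)) w, w⟫| ≤ ε₁ * ‖w‖^2 := by
      calc |⟪((Hmap x) - (Hmap y)) w, w⟫| ≤ ‖((Hmap x) - (Hmap y)) w‖ * ‖w‖ :=
            abs_real_inner_le_norm _ _
        _ ≤ (‖(Hmap x) - (Hmap y)‖ * ‖w‖) * ‖w‖ := by
            apply mul_le_mul_of_nonneg_right ((Hmap x - Hmap y).le_opNorm w) (norm_nonneg w)
        _ ≤ (ε₁ * ‖w‖) * ‖w‖ := by
            have h9 : ‖Hmap x - Hmap y‖ ≤ ε₁ := by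
              rw [norm_sub_rev]; exact hρ₂H y hy
            apply mul_le_mul_of_nonneg_right
              (mul_le_mul_of_nonneg_right h9 (norm_nonneg w)) (norm_nonneg w)
        _ = ε₁ * ‖w‖^2 := by ring
    have h3 := hQ1x w
    have h4 := abs_le.1 hbnd
    rw [hsplit]
    have h5 : ε₁ * ‖w‖^2 ≤ (1-t) * ε₀ * ‖w‖^2 := by
      rw [hε₁]
      nlinarith [mul_nonneg (mul_nonneg (by linarith : (0:ℝ) ≤ 1-t) (le_of_lt hε₀pos))
        (sq_nonneg ‖w‖)]
    linarith [h3, h4.2, h5]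
  -- first and second line derivatives of h
  set gf : E n → E n → ℝ := fun p w =>
    ⟪gradient u₀ p, w⟫ + s₁ * ⟪gradient udot p, w⟫
      - (t * ⟪w₂, w⟫ + (1 - t) * ⟪gc, w⟫) with hgf
  have hline1 : ∀ (y w : E n) (τ : ℝ), y + τ • w ∈ S →
      HasDerivAt (fun τ' : ℝ => h (y + τ' • w)) (gf (y + τ • w) w) τ := by
    intro y w τ hmem
    have hfe : (fun τ' : ℝ => h (y + τ' • w)) = fun τ' : ℝ =>
        (u₀ (y + τ' • w) + s₁ * udot (y + τ' • w))
        - ((t * (⟪w₂, y⟫ + c₂) + (1 - t) * (u₀ x + ⟪gc, y - x⟫))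
          + τ' * (t * ⟪w₂, w⟫ + (1 - t) * ⟪gc, w⟫)) := by
      funext τ'
      have e1 : ⟪w₂, y + τ' • w⟫ = ⟪w₂, y⟫ + τ' * ⟪w₂, w⟫ := by
        rw [inner_add_right, real_inner_smul_right]
      have e2 : ⟪gc, (y + τ' • w) - x⟫ = ⟪gc, y - x⟫ + τ' * ⟪gc, w⟫ := by
        rw [show (y + τ' • w) - x = (y - x) + τ' • w by abel, inner_add_right,
          real_inner_smul_right]
      simp only [hdef]
      rw [e1, e2]; ring
    rw [hfe]
    have hd1 : DifferentiableAt ℝ u₀ (y + τ • w) :=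
      diffAt_of_contDiffOn isOpen_interior hu₀ (hSI hmem)
    have hd2 : DifferentiableAt ℝ udot (y + τ • w) :=
      diffAt_of_contDiffOn hU hudot hmem.2
    exact ((hasDerivAt_line hd1).add ((hasDerivAt_line hd2).const_mul s₁)).sub
      ((hasDerivAt_mul_const _).const_add _)
  have hline2 : ∀ (y w : E n) (τ : ℝ), y + τ • w ∈ S →
      HasDerivAt (fun τ' : ℝ => gf (y + τ' • w) w) (Hq (y + τ • w) w) τ := by
    intro y w τ hmem
    have hgd1 : DifferentiableAt ℝ (gradient u₀) (y + τ • w) :=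
      gradDiffAt_of_contDiffOn isOpen_interior hu₀ (hSI hmem)
    have hgd2 : DifferentiableAt ℝ (gradient udot) (y + τ • w) :=
      gradDiffAt_of_contDiffOn hU hudot hmem.2
    exact ((hasDerivAt_line_grad hgd1).add
      ((hasDerivAt_line_grad hgd2).const_mul s₁)).sub_const _
  -- convexity of h on the closed ball
  have hcvh : ConvexOn ℝ (Metric.closedBall x ρ₂) h := by
    apply convexOn_of_line_derivs (convex_closedBall x ρ₂)
      (fun y w τ hm => hline1 y w τ (hcbS hm))
      (fun y w τ hm => hline2 y w τ (hcbS hm))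
    exact fun p hp w => hHpsd p hp w
  -- the gradient field of h vanishes at x
  set Gvec : E n → E n := fun p =>
    gradient u₀ p + s₁ • gradient udot p - (t • w₂ + (1 - t) • gc) with hGvec
  have hgfG : ∀ p w, gf p w = ⟪Gvec p, w⟫ := by
    intro p w
    simp only [hgf, hGvec, inner_sub_left, inner_add_left, real_inner_smul_left]
  have hGx : Gvec x = 0 := by
    have hzero : ∀ w : E n, gf x w = 0 := by
      intro w
      have hloc : IsLocalMin (fun τ : ℝ => h (x + τ • w)) 0 := by
        set δ : ℝ := ρ₂ / (‖w‖ + 1) with hδdef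
        have hδ : 0 < δ := div_pos hρ₂pos (by positivity)
        filter_upwards [isOpen_Ioo.mem_nhds (by constructor <;> [linarith; exact hδ] :
          (0:ℝ) ∈ Ioo (-δ) δ)] with τ hτ
        have hmem : x + τ • w ∈ Metric.closedBall x ρ₂ := by
          rw [Metric.mem_closedBall, dist_eq_norm, add_sub_cancel_left, norm_smul,
            Real.norm_eq_abs]
          have habs : |τ| ≤ δ := le_of_lt (abs_lt.2 ⟨hτ.1, hτ.2⟩)
          calc |τ| * ‖w‖ ≤ δ * ‖w‖ := mul_le_mul_of_nonneg_right habs (norm_nonneg w)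
            _ ≤ δ * (‖w‖ + 1) := by nlinarith [hδ]
            _ = ρ₂ := by rw [hδdef]; field_simp
        have h1 : 0 ≤ h (x + τ • w) := hnn _ (hSP (hcbS hmem))
        simpa [hx0] using h1
      have hder := hline1 x w 0 (by simpa using hxS)
      have := hloc.hasDerivAt_eq_zero hder
      simpa using this
    have := hzero (Gvec x)
    rw [hgfG] at this
    exact inner_self_eq_zero.1 this
  -- continuity of h and Gvec near x, and bounds
  have hcontP : ContinuousOn h P := by
    apply ContinuousOn.sub
    · exact hu₀c.add (hudc.const_smul s₁)
    · apply Continuous.continuousOn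
      apply Continuous.add
      · exact continuous_const.mul ((continuous_const.inner continuous_id).add
          continuous_const)
      · exact continuous_const.mul (continuous_const.add (continuous_const.inner
          (continuous_id.sub continuous_const)))
  -- the gap on P outside the ball
  obtain ⟨δg, hδgpos, hδg⟩ : ∃ δg > 0, ∀ z ∈ P, ρ₂ ≤ dist z x → δg ≤ h z := by
    set Kset : Set (E n) := P ∩ {z | ρ₂ ≤ dist z x} with hKset
    have hKc : IsCompact Kset := hPc.inter_right
      (isClosed_le continuous_const ((continuous_id.dist continuous_const)))
    rcases eq_empty_or_nonempty Kset with hKe | hKne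
    · exact ⟨1, one_pos, fun z hz hd =>
        absurd (Set.eq_empty_iff_forall_notMem.1 hKe z) (by simp [hKset]; exact ⟨hz, hd⟩)⟩
    · obtain ⟨z₀, hz₀K, hz₀min⟩ := hKc.exists_isMinOn hKne
        (hcontP.mono (fun p hp => hp.1))
      have hz₀P : z₀ ∈ P := hz₀K.1
      have hz₀ne : z₀ ≠ x := by
        intro hcon
        have := hz₀K.2
        rw [hcon] at this
        simp at this
        linarith
      have hpos0 : 0 < h z₀ := by
        have h1 := hgap z₀ hz₀P
        have h2 := cstrict z₀ hz₀P hz₀ne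
        nlinarith
      exact ⟨h z₀, hpos0, fun z hz hd => hz₀min (⟨hz, hd⟩ : z ∈ Kset)⟩
  -- P is bounded
  obtain ⟨R, hsubR⟩ : ∃ R, P ⊆ Metric.closedBall x R := by
    obtain ⟨R, hR⟩ := hPc.isBounded.subset_closedBall x
    exact ⟨R, hR⟩
  have hR0 : 0 ≤ R := by
    have := hsubR hxP
    rw [Metric.mem_closedBall] at this
    simpa using this
  set εg : ℝ := δg / (2 * (R + ρ₂ + 1)) with hεg
  have hεgpos : 0 < εg := by
    apply div_pos hδgpos
    nlinarith [hR0, hρ₂pos]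
  -- choose the final radius
  have hGcont : ContinuousOn Gvec S := by
    apply ContinuousOn.sub
    · apply ContinuousOn.add
      · exact ((contDiffOn_gradient isOpen_interior hu₀).continuousOn).mono inter_subset_left
      · exact (((contDiffOn_gradient hU hudot).continuousOn).mono inter_subset_right).const_smul s₁
    · exact continuousOn_const
  obtain ⟨r₃, hr₃pos, hr₃⟩ : ∃ r₃ > 0, ∀ y, dist y x < r₃ → ‖Gvec y‖ < εg := by
    have hca : ContinuousAt Gvec x := hGcont.continuousAt (hS.mem_nhds hxS)
    rw [Metric.continuousAt_iff] at hca
    obtain ⟨δ, hδpos, hδ⟩ := hca εg hεgpos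
    refine ⟨δ, hδpos, fun y hy => ?_⟩
    have := hδ hy
    rw [dist_eq_norm, hGx, sub_zero] at this
    exact this
  obtain ⟨r₄, hr₄pos, hr₄⟩ : ∃ r₄ > 0, ∀ y, dist y x < r₄ → |h y| < δg/4 := by
    have hca : ContinuousAt h x := hcontP.continuousAt
      (mem_nhds_iff.2 ⟨interior P, interior_subset, isOpen_interior, hxI⟩)
    rw [Metric.continuousAt_iff] at hca
    obtain ⟨δ, hδpos, hδ⟩ := hca (δg/4) (by linarith)
    refine ⟨δ, hδpos, fun y hy => ?_⟩
    have := hδ hy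
    rw [Real.dist_eq, hx0, sub_zero] at this
    exact this
  set r : ℝ := min (min r₃ r₄) ρ₂ with hrdef
  have hrpos : 0 < r := lt_min (lt_min hr₃pos hr₄pos) hρ₂pos
  have hrP : Metric.ball x r ⊆ P := by
    intro y hy
    apply hSP; apply hcbS
    rw [Metric.mem_ball] at hy
    rw [Metric.mem_closedBall]
    exact le_of_lt (lt_of_lt_of_le hy (min_le_right _ _))
  refine ⟨r, hrpos, hrP, ?_⟩
  intro y hy
  have hycb : y ∈ Metric.closedBall x ρ₂ := by
    rw [Metric.mem_ball] at hy
    rw [Metric.mem_closedBall]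
    exact le_of_lt (lt_of_lt_of_le hy (min_le_right _ _))
  have hyS : y ∈ S := hcbS hycb
  set wy : E n := Gvec y with hwy
  have hwysmall : ‖wy‖ < εg := by
    apply hr₃
    rw [Metric.mem_ball] at hy
    exact lt_of_lt_of_le hy (le_trans (min_le_left _ _) (min_le_left _ _))
  have hhysmall : |h y| < δg/4 := by
    apply hr₄
    rw [Metric.mem_ball] at hy
    exact lt_of_lt_of_le hy (le_trans (min_le_left _ _) (min_le_right _ _))
  -- the key inequality: h z ≥ h y + ⟪wy, z - y⟫ on P
  have hkey : ∀ z ∈ P, h y + ⟪wy, z - y⟫ ≤ h z := by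
    intro z hz
    by_cases hz2 : z ∈ Metric.closedBall x ρ₂
    · have hder : HasDerivAt (fun τ' : ℝ => h (y + τ' • (z - y))) (gf y (z - y)) 0 := by
        have := hline1 y (z - y) 0 (by simpa using hyS)
        simpa using this
      have := conv_grad_ineq hcvh hycb hz2 hder
      rw [hgfG] at this
      exact this
    · have hzfar : ρ₂ ≤ dist z x := by
        rw [Metric.mem_closedBall] at hz2
        linarith [not_le.1 hz2]
      have h1 : δg ≤ h z := hδg z hz hzfar
      have h2 : ⟪wy, z - y⟫ ≤ δg/2 := by
        have hb1 : |⟪wy, z - y⟫| ≤ ‖wy‖ * ‖z - y‖ := abs_real_inner_le_norm _ _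
        have hb2 : ‖z - y‖ ≤ R + ρ₂ := by
          have hzx : dist z x ≤ R := hsubR hz
          have hyx : dist y x ≤ ρ₂ := hycb
          calc ‖z - y‖ = dist z y := (dist_eq_norm _ _).symm
            _ ≤ dist z x + dist x y := dist_triangle _ _ _
            _ ≤ R + ρ₂ := by rw [dist_comm x y]; linarith
        have hb3 : ‖wy‖ * ‖z - y‖ ≤ εg * (R + ρ₂ + 1) := by
          apply mul_le_mul (le_of_lt hwysmall) (by linarith) (norm_nonneg _)
            (le_of_lt hεgpos)
        have hb4 : εg * (R + ρ₂ + 1) = δg/2 := by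
          rw [hεg]; field_simp
        have := abs_le.1 hb1
        linarith [this.2]
      have h3 : h y ≤ δg/4 := le_of_lt (lt_of_le_of_lt (le_abs_self _) hhysmall)
      calc h y + ⟪wy, z - y⟫ ≤ δg/4 + δg/2 := add_le_add h3 h2
        _ ≤ δg := by linarith
        _ ≤ h z := h1
  -- assemble the affine minorant touching at y
  refine ⟨wy + (t • w₂ + (1 - t) • gc),
    (h y - ⟪wy, y⟫) + (t * c₂ + (1 - t) * (u₀ x - ⟪gc, x⟫)), ?_, ?_⟩
  · intro z hz
    have hexp : ⟪wy + (t • w₂ + (1 - t) • gc), z⟫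
        + ((h y - ⟪wy, y⟫) + (t * c₂ + (1 - t) * (u₀ x - ⟪gc, x⟫)))
        = (h y + ⟪wy, z - y⟫)
          + (t * (⟪w₂, z⟫ + c₂) + (1 - t) * (u₀ x + ⟪gc, z - x⟫)) := by
      simp only [inner_add_left, inner_sub_right, real_inner_smul_left]
      ring
    rw [hexp]
    have h1 := hkey z hz
    have h2 : h z + (t * (⟪w₂, z⟫ + c₂) + (1 - t) * (u₀ x + ⟪gc, z - x⟫))
        = u₀ z + s₁ * udot z := by
      simp only [hdef]; ring
    linarith
  · have hexp : ⟪wy + (t • w₂ + (1 - t) • gc), y⟫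
        + ((h y - ⟪wy, y⟫) + (t * c₂ + (1 - t) * (u₀ x - ⟪gc, x⟫)))
        = h y + (t * (⟪w₂, y⟫ + c₂) + (1 - t) * (u₀ x + ⟪gc, y - x⟫)) := by
      simp only [inner_add_left, inner_sub_right, real_inner_smul_left]
      ring
    rw [hexp]
    simp only [hdef]; ring


end Tools7


section Tools8
variable {n : ℕ}

lemma approx_minorant {P : Set (E n)} {g : E n → ℝ} {y : E n} (hyP : y ∈ P)
    {m : ℝ} (hm : ∀ z ∈ P, m ≤ g z)
    {ε : ℝ} (hε : 0 < ε) (heq : g y = biconj P g y) :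
    ∃ w c, (∀ z ∈ P, ⟪w, z⟫ + c ≤ g z) ∧ g y - ε < ⟪w, y⟫ + c := by
  have hne : {r : ℝ | ∃ (a : E n →L[ℝ] ℝ) (c : ℝ),
      (∀ z ∈ P, a z + c ≤ g z) ∧ r = a y + c}.Nonempty :=
    ⟨(0 : E n →L[ℝ] ℝ) y + m, (0 : E n →L[ℝ] ℝ), m,
      fun z hz => by simpa using hm z hz, rfl⟩
  have hlt : g y - ε < biconj P g y := by rw [← heq]; linarith
  obtain ⟨r, ⟨a, c, hmin, rfl⟩, hgt⟩ := exists_lt_of_lt_csSup hne hlt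
  refine ⟨(InnerProductSpace.toDual ℝ (E n)).symm a, c, ?_, ?_⟩
  · intro z hz; rw [InnerProductSpace.toDual_symm_apply]; exact hmin z hz
  · rw [InnerProductSpace.toDual_symm_apply]; exact hgt

end Tools8


/-- For `0 < s₁ < s₂`, `closure(A_{s₁}) ∖ ∂P ⊆ int(A_{s₂})`; moreover
`⋃_{s>0} A_s = {y ∈ P : u̇₀(y) ≠ (u̇₀)**(y)}`. -/
theorem As_monotone_and_limit
    {n d : ℕ} (hn : 1 ≤ n)
    (v : Fin d → E n) (lam : Fin d → ℝ) (P : Set (E n))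
    (hP : GoodPolytope v lam P)
    (u₀ udot : E n → ℝ) (hD : GoodData v lam P u₀ udot)
    (u : ℝ → E n → ℝ) (hu : ∀ s y, u s y = u₀ y + s * udot y)
    (A : ℝ → Set (E n)) (hA : ∀ s, A s = {y ∈ P | u s y ≠ biconj P (u s) y}) :
    (∀ s₁ s₂ : ℝ, 0 < s₁ → s₁ < s₂ → closure (A s₁) \ frontier P ⊆ interior (A s₂)) ∧
    (⋃ s ∈ Ioi (0:ℝ), A s) = {y ∈ P | udot y ≠ biconj P udot y} := by
  obtain ⟨hPeq, hPc, hPint, hfacets, hdelz⟩ := hP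
  obtain ⟨⟨U₀, hU₀, hPU₀, F, hF, hu₀F⟩, hconv, hu₀sm, hpos, U, hU, hPU, hudot⟩ := hD
  have hPcv : Convex ℝ P := by rw [hPeq]; exact convex_Pset v lam
  have hPclosed : IsClosed P := hPc.isClosed
  have hPne : P.Nonempty := hPint.mono interior_subset
  have hu₀c : ContinuousOn u₀ P :=
    (((continuous_uG v lam).continuousOn).add (hF.continuousOn.mono hPU₀)).congr
      (fun y hy => hu₀F y hy)
  have hudc : ContinuousOn udot P := (hudot.continuousOn).mono hPU
  have husc : ∀ s : ℝ, ContinuousOn (u s) P := fun s =>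
    (hu₀c.add (continuousOn_const.mul hudc)).congr (fun y _ => hu s y)
  obtain ⟨zm0, hzm0, hmin0⟩ := hPc.exists_isMinOn hPne hu₀c
  obtain ⟨zM0, hzM0, hmax0⟩ := hPc.exists_isMaxOn hPne hu₀c
  obtain ⟨zmd, hzmd, hmind⟩ := hPc.exists_isMinOn hPne hudc
  set mu : ℝ := u₀ zm0 with hmu
  set Mu : ℝ := u₀ zM0 with hMu
  set md : ℝ := udot zmd with hmd
  have hAP : ∀ s, A s ⊆ P := fun s => by rw [hA s]; exact fun y hy => hy.1
  obtain ⟨x₀, hx₀I⟩ := hPint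
  constructor
  · -- Part 1: closure(A s₁) \ ∂P ⊆ int (A s₂)
    intro s₁ s₂ hs₁ hs12 x hx
    obtain ⟨hxcl, hxnf⟩ := hx
    have hxP : x ∈ P := (IsClosed.closure_subset_iff hPclosed).2 (hAP s₁) hxcl
    have hxI : x ∈ interior P := by
      by_contra hcon
      exact hxnf (by rw [hPclosed.frontier_eq]; exact ⟨hxP, hcon⟩)
    by_contra hxint
    obtain ⟨ρ', hρ'pos, hsub'⟩ := Metric.nhds_basis_closedBall.mem_iff.1
      (isOpen_interior.mem_nhds hxI)
    set ρ₀ : ℝ := ρ'/2 with hρ₀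
    have hρ₀pos : 0 < ρ₀ := by rw [hρ₀]; linarith
    have hball2 : Metric.closedBall x (2*ρ₀) ⊆ P := by
      have h2 : 2*ρ₀ = ρ' := by rw [hρ₀]; ring
      rw [h2]
      exact subset_trans hsub' interior_subset
    have hseq : ∀ k : ℕ, ∃ yk, yk ∈ Metric.ball x (min ρ₀ (1/(k+1))) ∧ yk ∉ A s₂ := by
      intro k
      by_contra hcon
      push_neg at hcon
      apply hxint
      exact mem_interior.2 ⟨Metric.ball x (min ρ₀ (1/(k+1))), fun y hy => hcon y hy,
        Metric.isOpen_ball, Metric.mem_ball_self (lt_min hρ₀pos (by positivity))⟩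
    choose xk hxkb hxkn using hseq
    have hxkcb : ∀ k, xk k ∈ Metric.closedBall x ρ₀ := fun k =>
      Metric.mem_closedBall.2 (le_trans (le_of_lt (Metric.mem_ball.1 (hxkb k)))
        (min_le_left _ _))
    have hxkP : ∀ k, xk k ∈ P := fun k =>
      hball2 (Metric.closedBall_subset_closedBall (by linarith) (hxkcb k))
    have heqk : ∀ k, u s₂ (xk k) = biconj P (u s₂) (xk k) := by
      intro k
      by_contra hne2
      exact (hxkn k) (by rw [hA s₂]; exact ⟨hxkP k, hne2⟩)
    have hxklim : Tendsto xk atTop (𝓝 x) := by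
      rw [tendsto_iff_dist_tendsto_zero]
      apply squeeze_zero (fun k => dist_nonneg) (fun k => ?_)
        tendsto_one_div_add_atTop_nhds_zero_nat
      exact le_of_lt (lt_of_lt_of_le (Metric.mem_ball.1 (hxkb k)) (min_le_right _ _))
    obtain ⟨w₂, c₂, hmin2, htouch2⟩ :=
      touch_limit hPc (husc s₂) hρ₀pos hball2 xk hxkcb hxklim heqk
    have hmin2' : ∀ z ∈ P, ⟪w₂, z⟫ + c₂ ≤ u₀ z + s₂ * udot z := fun z hz => by
      rw [← hu s₂ z]; exact hmin2 z hz
    have htou2' : ⟪w₂, x⟫ + c₂ = u₀ x + s₂ * udot x := by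
      rw [← hu s₂ x]; exact htouch2
    obtain ⟨r, hrpos, hrP, hkey⟩ := key_lemma hn hPcv hPc hU hPU hu₀sm hudot hconv hpos
      hu₀c hudc hs₁ hs12 hxI hmin2' htou2'
    rw [_root_.mem_closure_iff] at hxcl
    obtain ⟨y, hyb, hyA⟩ := hxcl _ Metric.isOpen_ball (Metric.mem_ball_self hrpos)
    obtain ⟨w, c, hminy, htouy⟩ := hkey y hyb
    have hyP : y ∈ P := hrP hyb
    have heqy : biconj P (u s₁) y = u s₁ y := by
      apply biconj_eq_of_touch hyP (fun z hz => by rw [hu s₁ z]; exact hminy z hz)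
      rw [hu s₁ y]; exact htouy
    rw [hA s₁] at hyA
    exact hyA.2 heqy.symm
  · -- Part 2: the union description
    ext y
    simp only [mem_iUnion, mem_setOf_eq, exists_prop]
    constructor
    · rintro ⟨s, hs, hyA⟩
      rw [hA s] at hyA
      obtain ⟨hyP, hne⟩ := hyA
      rw [mem_Ioi] at hs
      refine ⟨hyP, fun hcon => hne ?_⟩
      have hub : biconj P (u s) y ≤ u s y := by
        apply biconj_le hyP (m := mu + s * md)
        intro z hz
        rw [hu s z]
        have h1 : mu ≤ u₀ z := hmin0 hz
        have h2 : md ≤ udot z := hmind hz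
        have h3 := mul_le_mul_of_nonneg_left h2 (le_of_lt hs)
        linarith
      refine le_antisymm ?_ hub
      by_contra hlt
      push_neg at hlt
      set ε : ℝ := (u s y - biconj P (u s) y)/(2*(1+s)) with hε
      have hεpos : 0 < ε := div_pos (by linarith) (by linarith)
      obtain ⟨w₁, c₁, hm1, hv1⟩ := approx_minorant hyP (fun z hz => hmind hz) hεpos hcon
      obtain ⟨w₀, c₀, hm0, hv0⟩ := u0_env hPcv hu₀sm hconv hu₀c hx₀I hyP hεpos
      have hminS : ∀ z ∈ P, ⟪w₀ + s • w₁, z⟫ + (c₀ + s*c₁) ≤ u s z := by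
        intro z hz
        rw [hu s z, inner_add_left, real_inner_smul_left]
        have h2 := mul_le_mul_of_nonneg_left (hm1 z hz) (le_of_lt hs)
        have h1 := hm0 z hz
        have e2 : s * (⟪w₁, z⟫ + c₁) = s * ⟪w₁, z⟫ + s * c₁ := by ring
        rw [e2] at h2
        linarith
      have hlow := le_biconj hyP hminS
      rw [inner_add_left, real_inner_smul_left] at hlow
      have h3 := mul_lt_mul_of_pos_left hv1 hs
      have e1 : s * (udot y - ε) = s * udot y - s * ε := by ring
      have e3 : s * (⟪w₁, y⟫ + c₁) = s * ⟪w₁, y⟫ + s * c₁ := by ring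
      rw [e1, e3] at h3
      have hval : u s y - (1+s)*ε < biconj P (u s) y := by
        rw [hu s y]
        have e4 : (1+s)*ε = ε + s*ε := by ring
        rw [e4]
        linarith
      have e5 : (1+s)*ε = (u s y - biconj P (u s) y)/2 := by
        have h1s : (1:ℝ)+s ≠ 0 := by linarith
        rw [hε]
        field_simp
      rw [e5] at hval
      linarith
    · rintro ⟨hyP, hne⟩
      have hble : biconj P udot y ≤ udot y := biconj_le hyP (fun z hz => hmind hz)
      have hΔ : 0 < udot y - biconj P udot y := by
        rcases lt_or_eq_of_le hble with h | h
        · linarith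
        · exact absurd h.symm hne
      set Δ : ℝ := udot y - biconj P udot y with hΔdef
      set s : ℝ := max 1 ((Mu - u₀ y)/Δ + 1) with hsdef
      have hs0 : (0:ℝ) < s := lt_of_lt_of_le one_pos (le_max_left _ _)
      refine ⟨s, mem_Ioi.2 hs0, ?_⟩
      rw [hA s]
      refine ⟨hyP, ?_⟩
      have hBnd : biconj P (u s) y ≤ Mu + s * udot y - s * Δ := by
        apply csSup_le
        · refine ⟨(0 : E n →L[ℝ] ℝ) y + (mu + s*md), (0 : E n →L[ℝ] ℝ), mu + s*md,
            fun z hz => ?_, rfl⟩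
          simp only [ContinuousLinearMap.zero_apply, zero_add]
          rw [hu s z]
          have h1 : mu ≤ u₀ z := hmin0 hz
          have h2 := mul_le_mul_of_nonneg_left (hmind hz : md ≤ udot z) (le_of_lt hs0)
          linarith
        · rintro r ⟨a, c, hminr, rfl⟩
          set w := (InnerProductSpace.toDual ℝ (E n)).symm a with hw
          have hwz : ∀ z : E n, ⟪w, z⟫ = a z := fun z =>
            InnerProductSpace.toDual_symm_apply
          have hmind2 : ∀ z ∈ P, ⟪s⁻¹ • w, z⟫ + (c - Mu)/s ≤ udot z := by
            intro z hz
            rw [real_inner_smul_left, hwz]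
            have h1 := hminr z hz
            rw [hu s z] at h1
            have h2 : u₀ z ≤ Mu := hmax0 hz
            have h3 : a z + c - Mu ≤ s * udot z := by linarith
            have h4 := mul_le_mul_of_nonneg_left h3 (inv_nonneg.2 (le_of_lt hs0))
            rw [← mul_assoc, inv_mul_cancel₀ (ne_of_gt hs0), one_mul] at h4
            have h5 : s⁻¹ * (a z + c - Mu) = s⁻¹ * a z + (c - Mu)/s := by
              rw [div_eq_inv_mul]; ring
            linarith [h5 ▸ h4]
          have h5 := le_biconj hyP hmind2
          rw [real_inner_smul_left, hwz] at h5
          have h6 : biconj P udot y = udot y - Δ := by rw [hΔdef]; ring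
          rw [h6] at h5
          have h7 := mul_le_mul_of_nonneg_left h5 (le_of_lt hs0)
          rw [mul_add, ← mul_assoc, mul_inv_cancel₀ (ne_of_gt hs0), one_mul,
            mul_div_cancel₀ _ (ne_of_gt hs0)] at h7
          have h8 : s * (udot y - Δ) = s * udot y - s * Δ := by ring
          rw [h8] at h7
          linarith
      have hsge : (Mu - u₀ y)/Δ + 1 ≤ s := le_max_right _ _
      have h9 := mul_le_mul_of_nonneg_right hsge (le_of_lt hΔ)
      have h10 : ((Mu - u₀ y)/Δ + 1)*Δ = Mu - u₀ y + Δ := by field_simp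
      rw [h10] at h9
      have hlt2 : biconj P (u s) y < u s y := by
        rw [hu s y]
        have h11 : Mu - s*Δ < u₀ y := by linarith
        linarith [hBnd]
      exact (ne_of_lt hlt2).symm
end
end
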